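/- arXiv:1307.5967 — 6 statements merged into one kernel-verified Lean document; each statement's English description precedes it below -/
import Mathlib

section
/- (Hypergeometric FKG Inequality) Let Ω be a set with n ≥ 1 elements, let (B_i)_{i∈I} be a finite family of subsets of Ω, and let m be an integer with 0 ≤ m ≤ ⌊n/2⌋. Let P be the proportion of m-element subsets R of Ω such that B_i ⊄ R for all i ∈ I. Then for every η ∈ (0,1), P ≥ ∏_{i∈I} (1 − ((1+η)·m/n)^{|B_i|}) − exp(−η²·m/4). -/
set_option linter.unusedSectionVars false
open Finset

section Aux
variable {Ω : Type} [Fintype Ω] [DecidableEq Ω]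

/-- Binomial-style sum over a powerset. -/
lemma hfkg_sum_powerset (p q : ℝ) (U : Finset Ω) :
    ∑ T ∈ U.powerset, p ^ T.card * q ^ (U.card - T.card) = (p + q) ^ U.card := by
  have h := Finset.prod_add (fun _ : Ω => p) (fun _ : Ω => q) U
  simp only [prod_const] at h
  rw [h]
  refine Finset.sum_congr rfl fun T hT => ?_
  rw [card_sdiff_of_subset (mem_powerset.mp hT)]

/-- Log-modularity of the Bernoulli product weight. -/
lemma hfkg_weight_mod {p q : ℝ} {n : ℕ} (S T : Finset Ω)
    (hS : S.card ≤ n) (hT : T.card ≤ n) (hST : (S ∪ T).card ≤ n) :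
    (p ^ S.card * q ^ (n - S.card)) * (p ^ T.card * q ^ (n - T.card)) =
    (p ^ (S ∩ T).card * q ^ (n - (S ∩ T).card)) *
      (p ^ (S ∪ T).card * q ^ (n - (S ∪ T).card)) := by
  have h1 := Finset.card_inter_add_card_union S T
  have h2 : (S ∩ T).card ≤ S.card := card_le_card inter_subset_left
  rw [mul_mul_mul_comm, mul_mul_mul_comm (p ^ (S ∩ T).card), ← pow_add, ← pow_add,
    ← pow_add, ← pow_add]
  have e1 : S.card + T.card = (S ∩ T).card + (S ∪ T).card := h1.symm
  have e2 : n - S.card + (n - T.card) = n - (S ∩ T).card + (n - (S ∪ T).card) := by omega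
  rw [e1, e2]

/-- Sum of Bernoulli weights over supersets of `B`. -/
lemma hfkg_sum_superset (p q : ℝ) (B : Finset Ω) :
    ∑ S ∈ univ.filter (fun S : Finset Ω => B ⊆ S),
        p ^ S.card * q ^ (Fintype.card Ω - S.card)
      = p ^ B.card * (p + q) ^ (Fintype.card Ω - B.card) := by
  have key : ∑ S ∈ univ.filter (fun S : Finset Ω => B ⊆ S),
      p ^ S.card * q ^ (Fintype.card Ω - S.card)
      = ∑ T ∈ Bᶜ.powerset, p ^ (B.card + T.card) *
          q ^ (Fintype.card Ω - (B.card + T.card)) := by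
    refine Finset.sum_bij' (fun S _ => S \ B) (fun T _ => T ∪ B) ?_ ?_ ?_ ?_ ?_
    · intro S hS
      rw [mem_filter] at hS
      rw [mem_powerset]
      intro x hx
      rw [mem_sdiff] at hx
      simp [hx.2]
    · intro T hT
      simp only [mem_filter, mem_univ, true_and]
      exact subset_union_right
    · intro S hS
      rw [mem_filter] at hS
      exact sdiff_union_of_subset hS.2
    · intro T hT
      rw [mem_powerset] at hT
      rw [union_sdiff_right, Finset.sdiff_eq_self_iff_disjoint]
      exact disjoint_compl_left.mono_left hT
    · intro S hS
      rw [mem_filter] at hS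
      have : B.card + (S \ B).card = S.card := by
        rw [card_sdiff_of_subset hS.2]
        have := card_le_card hS.2
        omega
      rw [this]
  rw [key]
  have : ∀ T ∈ Bᶜ.powerset, p ^ (B.card + T.card) *
      q ^ (Fintype.card Ω - (B.card + T.card))
      = p ^ B.card * (p ^ T.card * q ^ (Bᶜ.card - T.card)) := by
    intro T hT
    rw [pow_add, card_compl, mul_assoc, Nat.sub_add_eq]
  rw [Finset.sum_congr rfl this, ← Finset.mul_sum, hfkg_sum_powerset, card_compl]

/-- Total Bernoulli weight. -/
lemma hfkg_sum_total (p q : ℝ) :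
    ∑ S : Finset Ω, p ^ S.card * q ^ (Fintype.card Ω - S.card)
      = (p + q) ^ Fintype.card Ω := by
  have := hfkg_sum_powerset (Ω := Ω) p q univ
  rwa [powerset_univ, card_univ] at this

/-- Harris inequality for two antitone functions against a log-modular weight. -/
lemma hfkg_harris (w f g : Finset Ω → ℝ) (hw : ∀ S, 0 ≤ w S)
    (hmod : ∀ S T, w S * w T = w (S ∩ T) * w (S ∪ T))
    (hf0 : ∀ S, 0 ≤ f S) (hg0 : ∀ S, 0 ≤ g S) (hf : Antitone f) (hg : Antitone g) :
    (∑ S, w S * f S) * (∑ S, w S * g S) ≤ (∑ S, w S) * (∑ S, w S * (f S * g S)) := by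
  set e : Equiv.Perm (Finset Ω) := Function.Involutive.toPerm _ (fun S : Finset Ω => compl_compl S)
  have he : ∀ S : Finset Ω, e S = Sᶜ := fun S => rfl
  have key := fkg (f := fun S : Finset Ω => f Sᶜ) (g := fun S : Finset Ω => g Sᶜ)
    (μ := fun S : Finset Ω => w Sᶜ)
    (fun S => hw Sᶜ) (fun S => hf0 Sᶜ) (fun S => hg0 Sᶜ)
    (fun a b hab => hf (compl_le_compl hab)) (fun a b hab => hg (compl_le_compl hab))
    (fun a b => by
      rw [compl_inf, compl_sup, sup_eq_union, inf_eq_inter, hmod aᶜ bᶜ, mul_comm])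
  have r1 : ∀ h : Finset Ω → ℝ, (∑ S : Finset Ω, h Sᶜ) = ∑ S : Finset Ω, h S := by
    intro h
    exact Equiv.sum_comp e h
  calc (∑ S, w S * f S) * (∑ S, w S * g S)
      = (∑ S : Finset Ω, w Sᶜ * f Sᶜ) * (∑ S : Finset Ω, w Sᶜ * g Sᶜ) := by
        rw [r1 (fun S => w S * f S), r1 (fun S => w S * g S)]
    _ ≤ (∑ S : Finset Ω, w Sᶜ) * (∑ S : Finset Ω, w Sᶜ * (f Sᶜ * g Sᶜ)) := key
    _ = (∑ S, w S) * (∑ S, w S * (f S * g S)) := by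
        rw [r1 w, r1 (fun S => w S * (f S * g S))]

/-- Iterated Harris inequality for a family of antitone `[0,∞)`-valued functions. -/
lemma hfkg_harris_prod {ι : Type} (w : Finset Ω → ℝ) (hw : ∀ S, 0 ≤ w S)
    (hmod : ∀ S T, w S * w T = w (S ∩ T) * w (S ∪ T)) (hsum : ∑ S, w S = 1)
    (g : ι → Finset Ω → ℝ) (hg0 : ∀ i S, 0 ≤ g i S) (hganti : ∀ i, Antitone (g i))
    (s : Finset ι) :
    ∏ i ∈ s, (∑ S, w S * g i S) ≤ ∑ S, w S * ∏ i ∈ s, g i S := by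
  classical
  induction s using Finset.induction_on with
  | empty => simp [hsum]
  | @insert a s ha ih =>
    rw [Finset.prod_insert ha]
    have hE : 0 ≤ ∑ S, w S * g a S := Finset.sum_nonneg fun S _ => mul_nonneg (hw S) (hg0 a S)
    have hGanti : Antitone fun S => ∏ i ∈ s, g i S := by
      intro S T hST
      exact Finset.prod_le_prod (fun i _ => hg0 i T) (fun i _ => hganti i hST)
    have hG0 : ∀ S, 0 ≤ ∏ i ∈ s, g i S := fun S => Finset.prod_nonneg fun i _ => hg0 i S
    calc (∑ S, w S * g a S) * ∏ i ∈ s, (∑ S, w S * g i S)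
        ≤ (∑ S, w S * g a S) * (∑ S, w S * ∏ i ∈ s, g i S) :=
          mul_le_mul_of_nonneg_left ih hE
      _ ≤ (∑ S, w S) * (∑ S, w S * ((g a S) * ∏ i ∈ s, g i S)) :=
          hfkg_harris w (g a) (fun S => ∏ i ∈ s, g i S) hw hmod (hg0 a) hG0 (hganti a) hGanti
      _ = ∑ S, w S * ∏ i ∈ insert a s, g i S := by
          rw [hsum, one_mul]
          refine Finset.sum_congr rfl fun S _ => ?_
          rw [Finset.prod_insert ha]

/-- Layer monotonicity for downward closed families defined by forbidden subsets. -/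
lemma hfkg_layer {ι : Type} [Fintype ι] (B : ι → Finset Ω) {m k : ℕ}
    (hmk : m ≤ k) (hkn : k ≤ Fintype.card Ω) :
    ((powersetCard k (univ : Finset Ω)).filter (fun R => ∀ i, ¬ B i ⊆ R)).card *
      (Fintype.card Ω).choose m ≤
    ((powersetCard m (univ : Finset Ω)).filter (fun R => ∀ i, ¬ B i ⊆ R)).card *
      (Fintype.card Ω).choose k := by
  classical
  set n := Fintype.card Ω
  set Fk := (powersetCard k (univ : Finset Ω)).filter (fun R => ∀ i, ¬ B i ⊆ R) with hFk
  set Fm := (powersetCard m (univ : Finset Ω)).filter (fun R => ∀ i, ¬ B i ⊆ R) with hFm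
  have step1 : Fk.card * k.choose m ≤ Fm.card * ((n - m).choose (k - m)) := by
    refine Finset.card_mul_le_card_mul (fun R S => S ⊆ R) ?_ ?_
    · intro R hR
      rw [hFk, mem_filter, mem_powersetCard] at hR
      obtain ⟨⟨hRu, hRc⟩, hRg⟩ := hR
      have hsub : powersetCard m R ⊆ Fm.bipartiteAbove (fun R S => S ⊆ R) R := by
        intro S hS
        rw [mem_powersetCard] at hS
        rw [Finset.bipartiteAbove, mem_filter, hFm, mem_filter, mem_powersetCard]
        exact ⟨⟨⟨subset_univ S, hS.2⟩, fun i hi => hRg i (hi.trans hS.1)⟩, hS.1⟩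
      calc k.choose m = (powersetCard m R).card := by rw [card_powersetCard, hRc]
        _ ≤ _ := card_le_card hsub
    · intro S hS
      rw [hFm, mem_filter, mem_powersetCard] at hS
      obtain ⟨⟨hSu, hSc⟩, hSg⟩ := hS
      have : (Fk.bipartiteBelow (fun R S => S ⊆ R) S).card ≤
          (powersetCard (k - m) (univ \ S)).card := by
        refine Finset.card_le_card_of_injOn (fun R => R \ S) ?_ ?_
        · intro R hR
          rw [Finset.bipartiteBelow, Finset.mem_coe, mem_filter, hFk, mem_filter, mem_powersetCard] at hR
          obtain ⟨⟨⟨hRu, hRc⟩, _⟩, hSR⟩ := hR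
          simp only [Finset.mem_coe]
          rw [mem_powersetCard]
          constructor
          · exact sdiff_subset_sdiff hRu le_rfl
          · rw [card_sdiff_of_subset hSR, hRc, hSc]
        · intro R1 h1 R2 h2 hEq
          simp only [Finset.mem_coe, Finset.bipartiteBelow, Finset.mem_filter] at h1 h2
          have e1 := sdiff_union_of_subset h1.2
          have e2 := sdiff_union_of_subset h2.2
          dsimp only at hEq
          rw [← e1, ← e2, hEq]
      refine this.trans ?_
      rw [card_powersetCard, card_univ_diff, hSc]
  have hc : 0 < k.choose m := Nat.choose_pos hmk
  have key : Fk.card * n.choose m * k.choose m ≤ Fm.card * n.choose k * k.choose m := by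
    calc Fk.card * n.choose m * k.choose m
        = Fk.card * k.choose m * n.choose m := by ring
      _ ≤ Fm.card * ((n - m).choose (k - m)) * n.choose m :=
          Nat.mul_le_mul_right _ step1
      _ = Fm.card * (n.choose m * (n - m).choose (k - m)) := by ring
      _ = Fm.card * (n.choose k * k.choose m) := by rw [← Nat.choose_mul hmk]
      _ = Fm.card * n.choose k * k.choose m := by ring
  exact Nat.le_of_mul_le_mul_right key hc

end Aux

lemma hfkg_one_add_le_exp {η : ℝ} (hη0 : 0 < η) (hη1 : η < 1) :
    1 + η ≤ Real.exp (η - η ^ 2 / 4) := by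
  have ht : 0 ≤ η - η ^ 2 / 4 := by nlinarith
  have h3 := Real.sum_le_exp_of_nonneg ht 3
  simp only [Finset.sum_range_succ, Finset.sum_range_zero] at h3
  norm_num at h3
  nlinarith [h3]

theorem stmt3 (Ω : Type) [Fintype Ω] [DecidableEq Ω] (hΩ : 1 ≤ Fintype.card Ω)
    (ι : Type) [Fintype ι] (B : ι → Finset Ω)
    (m : ℕ) (hm : m ≤ Fintype.card Ω / 2) (η : ℝ) (hη0 : 0 < η) (hη1 : η < 1) :
    (∏ i, (1 - ((1 + η) * (m : ℝ) / (Fintype.card Ω : ℝ)) ^ (B i).card)) -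
        Real.exp (-(η ^ 2 * (m : ℝ) / 4)) ≤
      (((Finset.powersetCard m (Finset.univ : Finset Ω)).filter
        (fun R => ∀ i, ¬ B i ⊆ R)).card : ℝ) / ((Fintype.card Ω).choose m : ℝ) := by
  classical
  set n := Fintype.card Ω with hn_def
  set p := (1 + η) * (m : ℝ) / (n : ℝ) with hp_def
  set q := 1 - p with hq_def
  set w : Finset Ω → ℝ := fun S => p ^ S.card * q ^ (n - S.card) with hw_def
  set g : ι → Finset Ω → ℝ := fun i S => if B i ⊆ S then 0 else 1 with hg_def
  have h2m : 2 * m ≤ n := by omega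
  have hmn : m ≤ n := by omega
  have hn0 : (0 : ℝ) < n := by exact_mod_cast hΩ
  have h2mR : 2 * (m : ℝ) ≤ n := by exact_mod_cast h2m
  have hη0' : (0 : ℝ) < 1 + η := by linarith
  have hp0 : 0 ≤ p := by
    apply div_nonneg _ hn0.le
    positivity
  have hp1 : p < 1 := by
    rw [hp_def, div_lt_one hn0]
    rcases Nat.eq_zero_or_pos m with h | h
    · rw [h]; push_cast; linarith
    · have h1m : (1 : ℝ) ≤ m := by exact_mod_cast h
      nlinarith
  have hq0 : 0 ≤ q := by rw [hq_def]; linarith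
  have hpq : p + q = 1 := by rw [hq_def]; ring
  have hw0 : ∀ S, 0 ≤ w S := fun S => mul_nonneg (pow_nonneg hp0 _) (pow_nonneg hq0 _)
  have hmod : ∀ S T : Finset Ω, w S * w T = w (S ∩ T) * w (S ∪ T) := fun S T =>
    hfkg_weight_mod S T (card_le_univ S) (card_le_univ T) (card_le_univ _)
  have hsum : ∑ S, w S = 1 := by
    rw [hw_def]
    rw [hfkg_sum_total p q, hpq, one_pow]
  have hg0 : ∀ i S, 0 ≤ g i S := by
    intro i S
    rw [hg_def]
    dsimp only
    split <;> norm_num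
  have hganti : ∀ i, Antitone (g i) := by
    intro i S T hST
    rw [hg_def]
    dsimp only
    by_cases hS : B i ⊆ S
    · simp [hS, hS.trans hST]
    · by_cases hT : B i ⊆ T <;> simp [hS, hT]
  -- expectation of each indicator
  have Egi : ∀ i, ∑ S, w S * g i S = 1 - p ^ (B i).card := by
    intro i
    have step : ∀ S : Finset Ω, w S * g i S = w S - (if B i ⊆ S then w S else 0) := by
      intro S
      rw [hg_def]
      by_cases h : B i ⊆ S <;> simp [h]
    rw [Finset.sum_congr rfl (fun S _ => step S), Finset.sum_sub_distrib, hsum,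
      ← Finset.sum_filter]
    have := hfkg_sum_superset p q (B i)
    rw [hpq, one_pow, mul_one] at this
    rw [hw_def, this]
  -- product of indicators
  have prodind : ∀ S : Finset Ω, (∏ i, g i S) = if (∀ i, ¬ B i ⊆ S) then (1 : ℝ) else 0 := by
    intro S
    by_cases h : ∀ i, ¬ B i ⊆ S
    · rw [if_pos h]
      refine Finset.prod_eq_one fun i _ => ?_
      rw [hg_def]
      simp [h i]
    · rw [if_neg h]
      push_neg at h
      obtain ⟨i, hi⟩ := h
      refine Finset.prod_eq_zero (mem_univ i) ?_
      rw [hg_def]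
      simp [hi]
  -- FKG step
  have main1 : (∏ i, (1 - p ^ (B i).card)) ≤ ∑ S, w S * ∏ i, g i S := by
    calc (∏ i, (1 - p ^ (B i).card)) = ∏ i, ∑ S, w S * g i S :=
          Finset.prod_congr rfl fun i _ => (Egi i).symm
      _ ≤ ∑ S, w S * ∏ i, g i S :=
          hfkg_harris_prod w hw0 hmod hsum g hg0 hganti univ
  set N : ℕ → ℕ := fun k =>
    ((powersetCard k (univ : Finset Ω)).filter (fun R => ∀ i, ¬ B i ⊆ R)).card with hN_def
  -- rewrite as a sum over layers
  have main2 : ∑ S, w S * ∏ i, g i S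
      = ∑ k ∈ Finset.range (n + 1), (N k : ℝ) * (p ^ k * q ^ (n - k)) := by
    have e1 : ∑ S, w S * ∏ i, g i S
        = ∑ S ∈ (univ : Finset Ω).powerset, (if (∀ i, ¬ B i ⊆ S) then w S else 0) := by
      rw [powerset_univ]
      refine Finset.sum_congr rfl fun S _ => ?_
      rw [prodind S, mul_ite, mul_one, mul_zero]
    rw [e1, powerset_card_biUnion, sum_biUnion (fun i _ j _ hij => pairwise_disjoint_powersetCard univ hij), card_univ]
    refine Finset.sum_congr rfl fun k _ => ?_
    rw [← Finset.sum_filter]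
    have e2 : ∀ S ∈ (powersetCard k (univ : Finset Ω)).filter (fun R => ∀ i, ¬ B i ⊆ R),
        w S = p ^ k * q ^ (n - k) := by
      intro S hS
      rw [mem_filter, mem_powersetCard] at hS
      rw [hw_def]
      dsimp only
      rw [hS.1.2]
    rw [Finset.sum_congr rfl e2, Finset.sum_const, nsmul_eq_mul]
  set ratio : ℝ := ((N m : ℝ)) / ((n.choose m : ℝ)) with hratio_def
  have hCm0 : (0 : ℝ) < (n.choose m : ℝ) := by exact_mod_cast Nat.choose_pos hmn
  have hbin : ∑ k ∈ Finset.range (n + 1), (n.choose k : ℝ) * (p ^ k * q ^ (n - k)) = 1 := by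
    have h := add_pow p q n
    rw [hpq, one_pow] at h
    calc ∑ k ∈ Finset.range (n + 1), (n.choose k : ℝ) * (p ^ k * q ^ (n - k))
        = ∑ k ∈ Finset.range (n + 1), p ^ k * q ^ (n - k) * (n.choose k : ℝ) :=
          Finset.sum_congr rfl fun k _ => by ring
      _ = 1 := h.symm
  -- split the sum at m
  have hsplit : ∑ k ∈ Finset.range (n + 1), (N k : ℝ) * (p ^ k * q ^ (n - k))
      = (∑ k ∈ Finset.Ico 0 m, (N k : ℝ) * (p ^ k * q ^ (n - k)))
        + ∑ k ∈ Finset.Ico m (n + 1), (N k : ℝ) * (p ^ k * q ^ (n - k)) := by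
    rw [Finset.range_eq_Ico, ← Finset.sum_Ico_consecutive _ (Nat.zero_le m) (by omega)]
  -- the body: bounded by ratio
  have hbody : ∑ k ∈ Finset.Ico m (n + 1), (N k : ℝ) * (p ^ k * q ^ (n - k)) ≤ ratio := by
    have hterm : ∀ k ∈ Finset.Ico m (n + 1),
        (N k : ℝ) * (p ^ k * q ^ (n - k)) ≤ ratio * ((n.choose k : ℝ) * (p ^ k * q ^ (n - k))) := by
      intro k hk
      rw [Finset.mem_Ico] at hk
      have hlay := hfkg_layer B hk.1 (by omega : k ≤ Fintype.card Ω)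
      have hNk : (N k : ℝ) ≤ ratio * (n.choose k : ℝ) := by
        rw [hratio_def, div_mul_eq_mul_div, le_div_iff₀ hCm0]
        exact_mod_cast hlay
      have hpow : (0:ℝ) ≤ p ^ k * q ^ (n - k) := mul_nonneg (pow_nonneg hp0 _) (pow_nonneg hq0 _)
      calc (N k : ℝ) * (p ^ k * q ^ (n - k))
          ≤ (ratio * (n.choose k : ℝ)) * (p ^ k * q ^ (n - k)) :=
            mul_le_mul_of_nonneg_right hNk hpow
        _ = ratio * ((n.choose k : ℝ) * (p ^ k * q ^ (n - k))) := by ring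
    have hratio0 : 0 ≤ ratio := div_nonneg (Nat.cast_nonneg _) (Nat.cast_nonneg _)
    calc ∑ k ∈ Finset.Ico m (n + 1), (N k : ℝ) * (p ^ k * q ^ (n - k))
        ≤ ∑ k ∈ Finset.Ico m (n + 1), ratio * ((n.choose k : ℝ) * (p ^ k * q ^ (n - k))) :=
          Finset.sum_le_sum hterm
      _ = ratio * ∑ k ∈ Finset.Ico m (n + 1), (n.choose k : ℝ) * (p ^ k * q ^ (n - k)) := by
          rw [Finset.mul_sum]
      _ ≤ ratio * ∑ k ∈ Finset.range (n + 1), (n.choose k : ℝ) * (p ^ k * q ^ (n - k)) := by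
          refine mul_le_mul_of_nonneg_left ?_ hratio0
          refine Finset.sum_le_sum_of_subset_of_nonneg ?_ ?_
          · rw [Finset.range_eq_Ico]
            exact Finset.Ico_subset_Ico (Nat.zero_le m) le_rfl
          · intro k _ _
            positivity
      _ = ratio := by rw [hbin, mul_one]
  -- the tail: Chernoff bound
  have hne : (1 + η) ≠ 0 := ne_of_gt hη0'
  have hnne : (n : ℝ) ≠ 0 := ne_of_gt hn0
  have hpr : p * (1 + η)⁻¹ = (m : ℝ) / n := by
    rw [hp_def]
    field_simp
  have hprq : p * (1 + η)⁻¹ + q = 1 - η * m / n := by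
    rw [hpr, hq_def, hp_def]
    field_simp
    ring
  have hpr0 : 0 ≤ p * (1 + η)⁻¹ := mul_nonneg hp0 (by positivity)
  have hbase0 : (0:ℝ) ≤ 1 - η * m / n := by
    rw [← hprq]; positivity
  have htail : ∑ k ∈ Finset.Ico 0 m, (N k : ℝ) * (p ^ k * q ^ (n - k))
      ≤ Real.exp (-(η ^ 2 * (m : ℝ) / 4)) := by
    have hterm : ∀ k ∈ Finset.Ico 0 m,
        (N k : ℝ) * (p ^ k * q ^ (n - k))
          ≤ (1 + η) ^ m * ((n.choose k : ℝ) * ((p * (1 + η)⁻¹) ^ k * q ^ (n - k))) := by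
      intro k hk
      rw [Finset.mem_Ico] at hk
      have hNk : (N k : ℝ) ≤ (n.choose k : ℝ) := by
        have : N k ≤ n.choose k := by
          rw [hN_def]
          calc ((powersetCard k (univ : Finset Ω)).filter fun R => ∀ i, ¬ B i ⊆ R).card
              ≤ (powersetCard k (univ : Finset Ω)).card := Finset.card_filter_le _ _
            _ = n.choose k := by rw [card_powersetCard, card_univ]
        exact_mod_cast this
      have hpk : p ^ k ≤ (p * (1 + η)⁻¹) ^ k * (1 + η) ^ m := by
        have e : p = (p * (1 + η)⁻¹) * (1 + η) := by field_simp
        calc p ^ k = (p * (1 + η)⁻¹) ^ k * (1 + η) ^ k := by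
              rw [← mul_pow, ← e]
          _ ≤ (p * (1 + η)⁻¹) ^ k * (1 + η) ^ m := by
              refine mul_le_mul_of_nonneg_left ?_ (pow_nonneg hpr0 _)
              exact pow_le_pow_right₀ (by linarith) hk.2.le
      calc (N k : ℝ) * (p ^ k * q ^ (n - k))
          ≤ (n.choose k : ℝ) * (((p * (1 + η)⁻¹) ^ k * (1 + η) ^ m) * q ^ (n - k)) := by
            refine mul_le_mul hNk ?_ (by positivity) (Nat.cast_nonneg _)
            exact mul_le_mul_of_nonneg_right hpk (pow_nonneg hq0 _)
        _ = (1 + η) ^ m * ((n.choose k : ℝ) * ((p * (1 + η)⁻¹) ^ k * q ^ (n - k))) := by ring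
    have hsum2 : ∑ k ∈ Finset.range (n + 1),
        (n.choose k : ℝ) * ((p * (1 + η)⁻¹) ^ k * q ^ (n - k)) = (1 - η * m / n) ^ n := by
      have h := add_pow (p * (1 + η)⁻¹) q n
      rw [hprq] at h
      calc ∑ k ∈ Finset.range (n + 1), (n.choose k : ℝ) * ((p * (1 + η)⁻¹) ^ k * q ^ (n - k))
          = ∑ k ∈ Finset.range (n + 1), (p * (1 + η)⁻¹) ^ k * q ^ (n - k) * (n.choose k : ℝ) :=
            Finset.sum_congr rfl fun k _ => by ring
        _ = (1 - η * m / n) ^ n := h.symm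
    calc ∑ k ∈ Finset.Ico 0 m, (N k : ℝ) * (p ^ k * q ^ (n - k))
        ≤ ∑ k ∈ Finset.Ico 0 m,
            (1 + η) ^ m * ((n.choose k : ℝ) * ((p * (1 + η)⁻¹) ^ k * q ^ (n - k))) :=
          Finset.sum_le_sum hterm
      _ = (1 + η) ^ m * ∑ k ∈ Finset.Ico 0 m,
            ((n.choose k : ℝ) * ((p * (1 + η)⁻¹) ^ k * q ^ (n - k))) := by rw [Finset.mul_sum]
      _ ≤ (1 + η) ^ m * ∑ k ∈ Finset.range (n + 1),
            ((n.choose k : ℝ) * ((p * (1 + η)⁻¹) ^ k * q ^ (n - k))) := by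
          refine mul_le_mul_of_nonneg_left ?_ (by positivity)
          refine Finset.sum_le_sum_of_subset_of_nonneg ?_ ?_
          · rw [Finset.range_eq_Ico]
            exact Finset.Ico_subset_Ico le_rfl (by omega)
          · intro k _ _
            positivity
      _ = (1 + η) ^ m * (1 - η * m / n) ^ n := by rw [hsum2]
      _ ≤ Real.exp (η - η ^ 2 / 4) ^ m * Real.exp (-(η * m / n)) ^ n := by
          refine mul_le_mul ?_ ?_ (pow_nonneg hbase0 _) (pow_nonneg (Real.exp_pos _).le _)
          · exact pow_le_pow_left₀ (by linarith) (hfkg_one_add_le_exp hη0 hη1) m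
          · refine pow_le_pow_left₀ hbase0 ?_ n
            have := Real.add_one_le_exp (-(η * m / n))
            linarith
      _ = Real.exp ((η - η ^ 2 / 4) * m) * Real.exp (-(η * m / n) * n) := by
          rw [← Real.exp_nat_mul, ← Real.exp_nat_mul]
          ring_nf
      _ = Real.exp (-(η ^ 2 * (m : ℝ) / 4)) := by
          rw [← Real.exp_add]
          congr 1
          field_simp
          ring
  -- assemble
  have chain : (∏ i, (1 - p ^ (B i).card))
      ≤ Real.exp (-(η ^ 2 * (m : ℝ) / 4)) + ratio := by
    calc (∏ i, (1 - p ^ (B i).card)) ≤ ∑ S, w S * ∏ i, g i S := main1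
      _ = _ := main2
      _ = _ := hsplit
      _ ≤ Real.exp (-(η ^ 2 * (m : ℝ) / 4)) + ratio := add_le_add htail hbody
  rw [hratio_def, hN_def] at chain
  linarith
end

section
/- For every integer r ≥ 2 and all positive integers n_1 ≤ n_2 ≤ … ≤ n_r, the maximum number of edges in a subgraph of the complete r-partite graph K(n_1,…,n_r) that contains no clique on r vertices is exactly e(K(n_1,…,n_r)) − n_1·n_2. -/
open Finset SimpleGraph Function

section
variable {r : ℕ} {n : Fin r → ℕ}
variable {r : ℕ} {n : Fin r → ℕ}

private lemma r_pos_aux {r : ℕ} (hr : 2 ≤ r) : 0 < r := by omega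

private lemma r_one_lt_aux {r : ℕ} (hr : 2 ≤ r) : 1 < r := by omega

private lemma fiber_bound (i j : Fin r) (hij : i ≠ j) (a : Fin (n i)) (b : Fin (n j)) :
    ((Finset.univ : Finset (∀ k, Fin (n k))).filter
        (fun t => t i = a ∧ t j = b)).card * (n i * n j) ≤ ∏ k, n k := by
  classical
  have hinj : Function.Injective
      (fun x : {t : ∀ k, Fin (n k) // t i = a ∧ t j = b} × (Fin (n i) × Fin (n j)) =>
        Function.update (Function.update x.1.1 i x.2.1) j x.2.2) := by
    rintro ⟨⟨t, hti, htj⟩, xi, xj⟩ ⟨⟨s, hsi, hsj⟩, yi, yj⟩ h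
    simp only at h
    have hj := congrFun h j
    rw [update_self, update_self] at hj
    have hi := congrFun h i
    rw [update_of_ne hij, update_of_ne hij, update_self, update_self] at hi
    subst hj; subst hi
    suffices hts : t = s by simp [hts]
    funext k
    by_cases hki : k = i
    · subst hki; rw [hti, hsi]
    · by_cases hkj : k = j
      · subst hkj; rw [htj, hsj]
      · have hk := congrFun h k
        rwa [update_of_ne hkj, update_of_ne hki, update_of_ne hkj, update_of_ne hki] at hk
  have hle := Fintype.card_le_of_injective _ hinj
  simpa [Fintype.card_subtype, mul_assoc] using hle

variable {r : ℕ} {n : Fin r → ℕ}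

private lemma exists_missing (H : SimpleGraph (Σ i : Fin r, Fin (n i)))
    (hcf : H.CliqueFree r) (t : ∀ k, Fin (n k)) :
    ∃ i j : Fin r, i < j ∧ ¬ H.Adj ⟨i, t i⟩ ⟨j, t j⟩ := by
  classical
  have hinj : Function.Injective (fun i : Fin r => (⟨i, t i⟩ : Σ i, Fin (n i))) := by
    intro i j h; exact congrArg Sigma.fst h
  have hcard : ((Finset.univ : Finset (Fin r)).image
      fun i => (⟨i, t i⟩ : Σ i, Fin (n i))).card = r := by
    rw [Finset.card_image_of_injective _ hinj, Finset.card_univ, Fintype.card_fin]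
  have hnc := hcf ((Finset.univ : Finset (Fin r)).image fun i => (⟨i, t i⟩ : Σ i, Fin (n i)))
  have hncl : ¬ H.IsClique ((Finset.univ : Finset (Fin r)).image
      fun i => (⟨i, t i⟩ : Σ i, Fin (n i))) := fun hcl => hnc ⟨hcl, hcard⟩
  rw [SimpleGraph.isClique_iff, Set.Pairwise] at hncl
  push_neg at hncl
  obtain ⟨v, hv, w, hw, hvw, hadj⟩ := hncl
  simp only [Finset.coe_image, Set.mem_image, Finset.coe_univ, Set.mem_univ, true_and] at hv hw
  obtain ⟨i, rfl⟩ := hv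
  obtain ⟨j, rfl⟩ := hw
  have hij : i ≠ j := fun h => hvw (by rw [h])
  rcases lt_or_gt_of_ne hij with h | h
  · exact ⟨i, j, h, hadj⟩
  · exact ⟨j, i, h, fun ha => hadj ha.symm⟩

private lemma missing_lower (hr : 2 ≤ r) (hpos : ∀ i, 0 < n i) (hmono : Monotone n)
    (H : SimpleGraph (Σ i : Fin r, Fin (n i)))
    (hle : H ≤ completeMultipartiteGraph fun i : Fin r => Fin (n i))
    (hcf : H.CliqueFree r) :
    Nat.card H.edgeSet + n ⟨0, r_pos_aux hr⟩ * n ⟨1, r_one_lt_aux hr⟩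
      ≤ Nat.card (completeMultipartiteGraph fun i : Fin r => Fin (n i)).edgeSet := by
  classical
  set K := completeMultipartiteGraph fun i : Fin r => Fin (n i) with hK
  set M₂ : Finset ((Σ i : Fin r, Fin (n i)) × (Σ i : Fin r, Fin (n i))) :=
    Finset.univ.filter (fun p : (Σ i : Fin r, Fin (n i)) × (Σ i : Fin r, Fin (n i)) => p.1.1 < p.2.1 ∧ ¬ H.Adj p.1 p.2) with hM₂
  set fib : (Σ i : Fin r, Fin (n i)) × (Σ i : Fin r, Fin (n i)) → Finset (∀ k, Fin (n k)) :=
    fun p => Finset.univ.filter (fun t => t p.1.1 = p.1.2 ∧ t p.2.1 = p.2.2) with hfib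
  set n0 := n ⟨0, r_pos_aux hr⟩
  set n1 := n ⟨1, r_one_lt_aux hr⟩
  -- step 1 : every transversal is in some fiber
  have hcover : (Finset.univ : Finset (∀ k, Fin (n k))) ⊆ M₂.biUnion fib := by
    intro t _
    obtain ⟨i, j, hij, hadj⟩ := exists_missing H hcf t
    rw [Finset.mem_biUnion]
    refine ⟨(⟨i, t i⟩, ⟨j, t j⟩), ?_, ?_⟩
    · simp [hM₂, hij, hadj]
    · simp [hfib]
  have hN : (∏ k, n k) ≤ ∑ p ∈ M₂, (fib p).card := by
    calc (∏ k, n k) = (Finset.univ : Finset (∀ k, Fin (n k))).card := by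
          simp [Finset.card_univ]
      _ ≤ (M₂.biUnion fib).card := Finset.card_le_card hcover
      _ ≤ ∑ p ∈ M₂, (fib p).card := Finset.card_biUnion_le
  -- step 2 : each fiber is small
  have hfibsmall : ∀ p ∈ M₂, (fib p).card * (n0 * n1) ≤ ∏ k, n k := by
    intro p hp
    rw [hM₂, Finset.mem_filter] at hp
    obtain ⟨-, hlt, -⟩ := hp
    have hne : p.1.1 ≠ p.2.1 := ne_of_lt hlt
    have h0 : n0 ≤ n p.1.1 := hmono (by simp [Fin.le_def])
    have hv : (1:ℕ) ≤ (p.2.1 : ℕ) := by have := Fin.lt_def.mp hlt; omega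
    have h1 : n1 ≤ n p.2.1 := hmono (by simpa [Fin.le_def] using hv)
    calc (fib p).card * (n0 * n1) ≤ (fib p).card * (n p.1.1 * n p.2.1) :=
          Nat.mul_le_mul_left _ (Nat.mul_le_mul h0 h1)
      _ ≤ ∏ k, n k := fiber_bound p.1.1 p.2.1 hne p.1.2 p.2.2
  -- step 3
  have hkey : (∏ k, n k) * (n0 * n1) ≤ M₂.card * (∏ k, n k) := by
    calc (∏ k, n k) * (n0 * n1) ≤ (∑ p ∈ M₂, (fib p).card) * (n0 * n1) :=
          Nat.mul_le_mul_right _ hN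
      _ = ∑ p ∈ M₂, (fib p).card * (n0 * n1) := by rw [Finset.sum_mul]
      _ ≤ ∑ p ∈ M₂, ∏ k, n k := Finset.sum_le_sum hfibsmall
      _ = M₂.card * ∏ k, n k := by rw [Finset.sum_const, smul_eq_mul]
  have hNpos : 0 < ∏ k, n k := Finset.prod_pos fun k _ => hpos k
  have hM₂card : n0 * n1 ≤ M₂.card := by
    have := hkey
    rw [mul_comm ((∏ k, n k)) (n0 * n1)] at this
    exact Nat.le_of_mul_le_mul_right this hNpos
  -- step 4 : inject M₂ into missing edges
  have hsub : H.edgeFinset ⊆ K.edgeFinset := SimpleGraph.edgeFinset_mono hle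
  have hinj2 : n0 * n1 ≤ (K.edgeFinset \ H.edgeFinset).card := by
    refine hM₂card.trans (Finset.card_le_card_of_injOn
      (fun p => s(p.1, p.2)) ?_ ?_)
    · intro p hp
      rw [Finset.mem_coe, hM₂, Finset.mem_filter] at hp
      obtain ⟨-, hlt, hadj⟩ := hp
      rw [Finset.mem_coe, Finset.mem_sdiff, SimpleGraph.mem_edgeFinset, SimpleGraph.mem_edgeSet,
        SimpleGraph.mem_edgeFinset, SimpleGraph.mem_edgeSet]
      refine ⟨?_, hadj⟩
      show p.1.1 ≠ p.2.1
      exact ne_of_lt hlt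
    · intro p hp q hq hpq
      rw [Finset.mem_coe, hM₂, Finset.mem_filter] at hp hq
      simp only [Sym2.eq_iff] at hpq
      rcases hpq with ⟨h1, h2⟩ | ⟨h1, h2⟩
      · exact Prod.ext h1 h2
      · exfalso
        have hp1 := hp.2.1
        have hq1 := hq.2.1
        rw [h1, h2] at hp1
        exact absurd hq1 (asymm hp1)
  have hcards : (K.edgeFinset \ H.edgeFinset).card + H.edgeFinset.card = K.edgeFinset.card :=
    Finset.card_sdiff_add_card_eq_card hsub
  have e1 : Nat.card H.edgeSet = H.edgeFinset.card := by
    rw [Nat.card_eq_fintype_card, SimpleGraph.edgeFinset, Set.toFinset_card]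
  have e2 : Nat.card K.edgeSet = K.edgeFinset.card := by
    rw [Nat.card_eq_fintype_card, SimpleGraph.edgeFinset, Set.toFinset_card]
  omega

variable {r : ℕ} {n : Fin r → ℕ}

private def cpse (r : ℕ) (hr : 2 ≤ r) : Fin r → Fin r :=
  fun i => if i.1 = 0 then ⟨1, r_one_lt_aux hr⟩ else i

private lemma cpse_eq (hr : 2 ≤ r) {i j : Fin r} (h : cpse r hr i = cpse r hr j)
    (hij : i ≠ j) : (i.1 = 0 ∧ j.1 = 1) ∨ (i.1 = 1 ∧ j.1 = 0) := by
  have hij' : i.1 ≠ j.1 := fun e => hij (Fin.ext e)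
  unfold cpse at h
  split_ifs at h with h1 h2 h2 <;>
    simp only [Fin.ext_iff, Fin.mk.injEq] at h <;> omega

private lemma cpse_one_le (hr : 2 ≤ r) (i : Fin r) : 1 ≤ (cpse r hr i).1 := by
  unfold cpse
  split_ifs with h
  · exact Nat.le_refl 1
  · omega

private lemma construction (hr : 2 ≤ r) (hpos : ∀ i, 0 < n i) (hmono : Monotone n) :
    ∃ H : SimpleGraph (Σ i : Fin r, Fin (n i)),
      H ≤ completeMultipartiteGraph (fun i : Fin r => Fin (n i)) ∧ H.CliqueFree r ∧
      Nat.card H.edgeSet + n ⟨0, r_pos_aux hr⟩ * n ⟨1, r_one_lt_aux hr⟩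
        = Nat.card (completeMultipartiteGraph fun i : Fin r => Fin (n i)).edgeSet := by
  classical
  set K := completeMultipartiteGraph fun i : Fin r => Fin (n i) with hK
  set i0 : Fin r := ⟨0, r_pos_aux hr⟩ with hi0
  set i1 : Fin r := ⟨1, r_one_lt_aux hr⟩ with hi1
  set H : SimpleGraph (Σ i : Fin r, Fin (n i)) :=
    SimpleGraph.comap (fun v : Σ i : Fin r, Fin (n i) => cpse r hr v.1) ⊤ with hH
  have hadjH : ∀ v w : Σ i : Fin r, Fin (n i),
      H.Adj v w ↔ cpse r hr v.1 ≠ cpse r hr w.1 := fun v w => Iff.rfl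
  have hadjK : ∀ v w : Σ i : Fin r, Fin (n i), K.Adj v w ↔ v.1 ≠ w.1 := fun v w => Iff.rfl
  have hle : H ≤ K := by
    intro v w hvw
    rw [hadjH] at hvw
    rw [hadjK]
    exact fun e => hvw (by rw [e])
  have hcf : H.CliqueFree r := by
    have hcol : H.Colorable (r - 1) := by
      refine ⟨Coloring.mk (fun v => ⟨(cpse r hr v.1).1 - 1, by
        have := (cpse r hr v.1).2; have := cpse_one_le hr v.1; omega⟩) ?_⟩
      intro v w hvw
      rw [hadjH] at hvw
      simp only [ne_eq, Fin.mk.injEq]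
      have h1 := cpse_one_le hr v.1
      have h2 := cpse_one_le hr w.1
      intro he
      exact hvw (Fin.ext (by omega))
    exact hcol.cliqueFree (by omega)
  refine ⟨H, hle, hcf, ?_⟩
  -- edge counting
  set φ : Fin (n i0) × Fin (n i1) → Sym2 (Σ i : Fin r, Fin (n i)) :=
    fun ab => s(⟨i0, ab.1⟩, ⟨i1, ab.2⟩) with hφ
  have hφinj : Function.Injective φ := by
    intro ab cd h
    rcases Sym2.eq_iff.mp h with ⟨h1, h2⟩ | ⟨h1, h2⟩
    · exact Prod.ext (sigma_mk_injective (β := fun i => Fin (n i)) h1) (sigma_mk_injective (β := fun i => Fin (n i)) h2)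
    · exact absurd (congrArg Sigma.fst h1) (by simp [hi0, hi1, Fin.ext_iff])
  have himage : K.edgeFinset \ H.edgeFinset = Finset.image φ Finset.univ := by
    ext e
    induction e with
    | _ v w =>
      simp only [Finset.mem_sdiff, SimpleGraph.mem_edgeFinset, SimpleGraph.mem_edgeSet,
        Finset.mem_image, Finset.mem_univ, true_and]
      constructor
      · rintro ⟨hKa, hHa⟩
        rw [hadjK] at hKa
        rw [hadjH, not_not] at hHa
        obtain ⟨vi, va⟩ := v
        obtain ⟨wi, wa⟩ := w
        rcases cpse_eq hr hHa hKa with ⟨h1, h2⟩ | ⟨h1, h2⟩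
        · have hv : vi = i0 := Fin.ext (by rw [h1])
          have hw : wi = i1 := Fin.ext (by rw [h2])
          subst hv; subst hw
          exact ⟨(va, wa), rfl⟩
        · have hv : vi = i1 := Fin.ext (by rw [h1])
          have hw : wi = i0 := Fin.ext (by rw [h2])
          subst hv; subst hw
          exact ⟨(wa, va), Sym2.eq_swap⟩
      · rintro ⟨ab, hab⟩
        rw [hφ] at hab
        simp only [Sym2.eq_iff] at hab
        have hne : K.Adj ⟨i0, ab.1⟩ ⟨i1, ab.2⟩ := by
          rw [hadjK]; simp [hi0, hi1, Fin.ext_iff]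
        have hnadj : ¬ H.Adj ⟨i0, ab.1⟩ ⟨i1, ab.2⟩ := by
          rw [hadjH, not_not]
          show cpse r hr i0 = cpse r hr i1
          unfold cpse
          simp [hi0, hi1]
        rcases hab with ⟨h1, h2⟩ | ⟨h1, h2⟩
        · subst h1; subst h2; exact ⟨hne, hnadj⟩
        · subst h1; subst h2
          exact ⟨hne.symm, fun ha => hnadj ha.symm⟩
  have hcard : (K.edgeFinset \ H.edgeFinset).card = n i0 * n i1 := by
    rw [himage, Finset.card_image_of_injective _ hφinj, Finset.card_univ]
    simp
  have hsub : H.edgeFinset ⊆ K.edgeFinset := SimpleGraph.edgeFinset_mono hle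
  have hcards := Finset.card_sdiff_add_card_eq_card hsub
  have e1 : Nat.card H.edgeSet = H.edgeFinset.card := by
    rw [Nat.card_eq_fintype_card, SimpleGraph.edgeFinset, Set.toFinset_card]
  have e2 : Nat.card K.edgeSet = K.edgeFinset.card := by
    rw [Nat.card_eq_fintype_card, SimpleGraph.edgeFinset, Set.toFinset_card]
  omega


end

theorem stmt4 (r : ℕ) (hr : 2 ≤ r) (n : Fin r → ℕ) (hpos : ∀ i, 0 < n i)
    (hmono : Monotone n) :
    IsGreatest
      {m : ℕ | ∃ H : SimpleGraph (Σ i : Fin r, Fin (n i)),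
        H ≤ SimpleGraph.completeMultipartiteGraph (fun i : Fin r => Fin (n i)) ∧
        H.CliqueFree r ∧ Nat.card H.edgeSet = m}
      (Nat.card (SimpleGraph.completeMultipartiteGraph (fun i : Fin r => Fin (n i))).edgeSet -
        n ⟨0, by omega⟩ * n ⟨1, by omega⟩) := by
  constructor
  · obtain ⟨H, hle, hcf, hcount⟩ := construction hr hpos hmono
    exact ⟨H, hle, hcf, by omega⟩
  · rintro m ⟨H, hle, hcf, rfl⟩
    have := missing_lower hr hpos hmono H hle hcf
    omega
end

section
/- For every integer r ≥ 2 and every γ > 0 there exists a constant c such that for every ε' > 0 there is n_0 with the following property: for all n ≥ n_0 and all integers m with c·n ≤ m ≤ ex(n, K_{r+1}), Σ_{Π ∈ P_{n,r} \ P_{n,r}(γ)} C(e(Π), m) ≤ ε' · C(ex(n, K_{r+1}), m). -/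
open Finset

/-- `ex(n, K_k)`: the maximum number of edges of a `K_k`-free graph on `n` vertices. -/
noncomputable def exNum (n k : ℕ) : ℕ :=
  sSup {m : ℕ | ∃ G : SimpleGraph (Fin n), G.CliqueFree k ∧ Nat.card G.edgeSet = m}

/-- A partition of `[n]` is `γ`-balanced if each part has between `(1/r - γ)n` and
`(1/r + γ)n` elements. -/
def IsBalanced (n r : ℕ) (γ : ℝ) (P : Finpartition (Finset.univ : Finset (Fin n))) : Prop :=
  ∀ A ∈ P.parts, ((1 : ℝ) / r - γ) * n ≤ (A.card : ℝ) ∧ (A.card : ℝ) ≤ ((1 : ℝ) / r + γ) * n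

/-- The number of edges of the complete multipartite graph whose color classes are the parts
of `P`. -/
def ePart {n : ℕ} (P : Finpartition (Finset.univ : Finset (Fin n))) : ℕ :=
  n.choose 2 - ∑ A ∈ P.parts, A.card.choose 2

/-! ### Binomial coefficient lemmas -/

lemma choose_two_add (a b : ℕ) : (a + b).choose 2 = a.choose 2 + b.choose 2 + a * b := by
  induction b with
  | zero => simp
  | succ b ih =>
    have h1 : ∀ k : ℕ, (k + 1).choose 2 = k + k.choose 2 := by
      intro k
      rw [Nat.choose_succ_succ, Nat.choose_one_right]
    have h2 := h1 (a + b)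
    have h3 := h1 b
    have h4 : a + (b + 1) = (a + b) + 1 := by ring
    rw [h4, h2, ih, h3]
    ring

lemma sum_choose_two_le {ι : Type*} (s : Finset ι) (f : ι → ℕ) :
    ∑ i ∈ s, (f i).choose 2 ≤ (∑ i ∈ s, f i).choose 2 := by
  induction s using Finset.cons_induction with
  | empty => simp
  | cons a s ha ih =>
    rw [Finset.sum_cons, Finset.sum_cons, choose_two_add]
    omega

lemma desc_mul_pow_le {a b : ℕ} (h : a ≤ b) (m : ℕ) :
    a.descFactorial m * b ^ m ≤ b.descFactorial m * a ^ m := by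
  induction m with
  | zero => simp
  | succ m ih =>
    have key : (a - m) * b ≤ (b - m) * a := by
      rcases le_or_gt a m with hm | hm
      · simp [Nat.sub_eq_zero_of_le hm]
      · have hmb : m ≤ b := le_of_lt (lt_of_lt_of_le hm h)
        calc (a - m) * b = (a - m) * m + (a - m) * (b - m) := by
              rw [← Nat.mul_add, Nat.add_sub_cancel' hmb]
            _ ≤ (b - m) * m + (b - m) * (a - m) := by
              refine Nat.add_le_add (Nat.mul_le_mul_right _ (Nat.sub_le_sub_right h m)) ?_
              rw [Nat.mul_comm]
            _ = (b - m) * a := by rw [← Nat.mul_add, Nat.add_sub_cancel' (le_of_lt hm)]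
    calc a.descFactorial (m + 1) * b ^ (m + 1)
        = ((a - m) * b) * (a.descFactorial m * b ^ m) := by
          rw [Nat.descFactorial_succ, pow_succ]; ring
      _ ≤ ((b - m) * a) * (b.descFactorial m * a ^ m) := Nat.mul_le_mul key ih
      _ = b.descFactorial (m + 1) * a ^ (m + 1) := by
          rw [Nat.descFactorial_succ, pow_succ]; ring

lemma choose_mul_pow_le {a b : ℕ} (h : a ≤ b) (m : ℕ) :
    a.choose m * b ^ m ≤ b.choose m * a ^ m := by
  have hd := desc_mul_pow_le h m
  rw [Nat.descFactorial_eq_factorial_mul_choose, Nat.descFactorial_eq_factorial_mul_choose] at hd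
  have hf := Nat.factorial_pos m
  calc a.choose m * b ^ m = ((Nat.factorial m) * (a.choose m * b ^ m)) / (Nat.factorial m) := by
        rw [Nat.mul_div_cancel_left _ hf]
    _ ≤ ((Nat.factorial m) * (b.choose m * a ^ m)) / (Nat.factorial m) := by
        apply Nat.div_le_div_right
        calc (Nat.factorial m) * (a.choose m * b ^ m)
            = (Nat.factorial m) * a.choose m * b ^ m := by ring
          _ ≤ (Nat.factorial m) * b.choose m * a ^ m := hd
          _ = (Nat.factorial m) * (b.choose m * a ^ m) := by ring
    _ = b.choose m * a ^ m := Nat.mul_div_cancel_left _ hf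

lemma choose_le_pow_mul_choose {a b m : ℕ} {x : ℝ} (hb : 0 < b) (hx : 0 ≤ x) (hx1 : x ≤ 1)
    (hab : (a : ℝ) ≤ x * b) : (a.choose m : ℝ) ≤ x ^ m * b.choose m := by
  have habn : a ≤ b := by
    have : (a : ℝ) ≤ (b : ℝ) := hab.trans (by nlinarith [(Nat.cast_pos (α := ℝ)).mpr hb])
    exact_mod_cast this
  have h1 : (a.choose m : ℝ) * (b : ℝ) ^ m ≤ (b.choose m : ℝ) * (a : ℝ) ^ m := by
    exact_mod_cast choose_mul_pow_le habn m
  have hbp : (0 : ℝ) < (b : ℝ) ^ m := by positivity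
  have h2 : (a : ℝ) ^ m ≤ (x * b) ^ m := by
    apply pow_le_pow_left₀ (by positivity) hab
  rw [mul_pow] at h2
  have h3 : (a.choose m : ℝ) * (b : ℝ) ^ m ≤ (x ^ m * b.choose m) * (b : ℝ) ^ m := by
    calc (a.choose m : ℝ) * (b : ℝ) ^ m ≤ (b.choose m : ℝ) * (a : ℝ) ^ m := h1
      _ ≤ (b.choose m : ℝ) * (x ^ m * (b : ℝ) ^ m) := by
          apply mul_le_mul_of_nonneg_left h2 (by positivity)
      _ = (x ^ m * b.choose m) * (b : ℝ) ^ m := by ring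
  exact le_of_mul_le_mul_right h3 hbp

/-! ### Lower bound on the Turán number -/

lemma exNum_bddAbove (n k : ℕ) :
    BddAbove {m : ℕ | ∃ G : SimpleGraph (Fin n), G.CliqueFree k ∧ Nat.card G.edgeSet = m} := by
  refine ⟨Nat.card (Sym2 (Fin n)), ?_⟩
  rintro m ⟨G, -, rfl⟩
  exact Nat.card_le_card_of_injective Subtype.val Subtype.val_injective

lemma turan_fiber_card_le (n r : ℕ) (v : Fin n) :
    #(univ.filter fun w : Fin n => (w : ℕ) % r = (v : ℕ) % r) ≤ n / r + 1 := by
  have h : #(univ.filter fun w : Fin n => (w : ℕ) % r = (v : ℕ) % r)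
      ≤ #(Finset.range (n / r + 1)) := by
    refine Finset.card_le_card_of_injOn (fun w : Fin n => (w : ℕ) / r) ?_ ?_
    · intro w hw
      simp only [Finset.coe_range, Set.mem_Iio, Finset.mem_range]
      have : (w : ℕ) / r ≤ n / r := Nat.div_le_div_right (le_of_lt w.2)
      omega
    · intro w1 hw1 w2 hw2 h
      simp only [Finset.coe_filter, Set.mem_setOf_eq, Finset.mem_univ, true_and] at hw1 hw2
      apply Fin.val_injective
      have hq : (w1 : ℕ) / r = (w2 : ℕ) / r := h
      have hm : (w1 : ℕ) % r = (w2 : ℕ) % r := hw1.trans hw2.symm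
      have e1 := Nat.div_add_mod (w1 : ℕ) r
      have e2 := Nat.div_add_mod (w2 : ℕ) r
      rw [hq, hm, e2] at e1
      exact e1.symm
  simpa using h

lemma exNum_lower (n r : ℕ) (hr : 2 ≤ r) :
    (n : ℝ) * ((n : ℝ) - (n : ℝ) / r - 1) / 2 ≤ (exNum n (r + 1) : ℝ) := by
  have hr0 : 0 < r := by omega
  set G := SimpleGraph.turanGraph n r with hG
  have hmem : Nat.card G.edgeSet ∈
      {m : ℕ | ∃ G : SimpleGraph (Fin n), G.CliqueFree (r + 1) ∧ Nat.card G.edgeSet = m} :=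
    ⟨G, SimpleGraph.turanGraph_cliqueFree hr0, rfl⟩
  have hle : Nat.card G.edgeSet ≤ exNum n (r + 1) := le_csSup (exNum_bddAbove n (r + 1)) hmem
  have hcard : Nat.card G.edgeSet = #G.edgeFinset := by
    rw [Nat.card_eq_fintype_card, SimpleGraph.edgeFinset_card]
  have hdeg : ∀ v : Fin n, (n : ℝ) - ((n : ℝ) / r + 1) ≤ (G.degree v : ℝ) := by
    intro v
    have hfc := turan_fiber_card_le n r v
    have hsplit : #(univ.filter fun w : Fin n => (w : ℕ) % r = (v : ℕ) % r)
        + #(univ.filter fun w : Fin n => ¬ (w : ℕ) % r = (v : ℕ) % r) = n := by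
      rw [Finset.card_filter_add_card_filter_not]
      simp
    have hdv : G.degree v = #(univ.filter fun w : Fin n => ¬ (w : ℕ) % r = (v : ℕ) % r) := by
      rw [← SimpleGraph.card_neighborFinset_eq_degree, SimpleGraph.neighborFinset_eq_filter]
      congr 1
      apply Finset.filter_congr
      intro w _
      constructor
      · intro h; exact fun hh => h hh.symm
      · intro h; exact fun hh => h hh.symm
    have h1 : n / r + 1 + G.degree v ≥ n := by omega
    have h2 : ((n / r : ℕ) : ℝ) ≤ (n : ℝ) / r := Nat.cast_div_le
    have h3 : ((n : ℕ) : ℝ) ≤ ((n / r : ℕ) : ℝ) + 1 + (G.degree v : ℝ) := by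
      exact_mod_cast Nat.cast_le.mpr h1
    linarith
  have hsum : ∑ v : Fin n, G.degree v = 2 * #G.edgeFinset := G.sum_degrees_eq_twice_card_edges
  have h2E : (n : ℝ) * ((n : ℝ) - (n : ℝ) / r - 1) ≤ 2 * (#G.edgeFinset : ℝ) := by
    have hstep : (n : ℝ) * ((n : ℝ) - (n : ℝ) / r - 1) ≤ ∑ v : Fin n, (G.degree v : ℝ) := by
      calc (n : ℝ) * ((n : ℝ) - (n : ℝ) / r - 1)
          = ∑ _v : Fin n, ((n : ℝ) - ((n : ℝ) / r + 1)) := by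
            rw [Finset.sum_const, Finset.card_univ, Fintype.card_fin, nsmul_eq_mul]; ring
        _ ≤ ∑ v : Fin n, (G.degree v : ℝ) := Finset.sum_le_sum fun v _ => hdeg v
    calc (n : ℝ) * ((n : ℝ) - (n : ℝ) / r - 1) ≤ ∑ v : Fin n, (G.degree v : ℝ) := hstep
      _ = ((∑ v : Fin n, G.degree v : ℕ) : ℝ) := by push_cast; ring
      _ = 2 * (#G.edgeFinset : ℝ) := by rw [hsum]; push_cast; ring
  have hfin : (#G.edgeFinset : ℝ) ≤ (exNum n (r + 1) : ℝ) := by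
    exact_mod_cast hcard ▸ hle
  linarith

/-! ### Upper bound on `ePart` for unbalanced partitions -/

lemma ePart_le {n r : ℕ} (hr : 2 ≤ r) (γ₀ : ℝ)
    (P : Finpartition (Finset.univ : Finset (Fin n))) (hc : P.parts.card = r)
    (hA : ∃ A ∈ P.parts, γ₀ ^ 2 * (n : ℝ) ^ 2 ≤ ((A.card : ℝ) - (n : ℝ) / r) ^ 2) :
    (ePart P : ℝ) ≤ (1 - 1 / (r : ℝ) - γ₀ ^ 2) * (n : ℝ) ^ 2 / 2 := by
  have hr0 : (0 : ℝ) < r := by positivity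
  have hsumn : ∑ A ∈ P.parts, A.card = n := by
    rw [Finpartition.sum_card_parts, Finset.card_univ, Fintype.card_fin]
  have hsumR : ∑ A ∈ P.parts, (A.card : ℝ) = (n : ℝ) := by exact_mod_cast hsumn
  have hdev : ∑ A ∈ P.parts, ((A.card : ℝ) - (n : ℝ) / r) ^ 2
      = (∑ A ∈ P.parts, (A.card : ℝ) ^ 2) - (n : ℝ) ^ 2 / r := by
    have hconst : ∑ _A ∈ P.parts, ((n : ℝ) / r) ^ 2 = r * ((n : ℝ) / r) ^ 2 := by
      rw [Finset.sum_const, hc, nsmul_eq_mul]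
    have hexp : ∑ A ∈ P.parts, ((A.card : ℝ) - (n : ℝ) / r) ^ 2
        = ∑ A ∈ P.parts,
          ((A.card : ℝ) ^ 2 - 2 * ((n : ℝ) / r) * (A.card : ℝ) + ((n : ℝ) / r) ^ 2) := by
      apply Finset.sum_congr rfl; intro A _; ring
    rw [hexp, Finset.sum_add_distrib, Finset.sum_sub_distrib, hconst, ← Finset.mul_sum, hsumR]
    field_simp
    ring
  obtain ⟨A, hAmem, hAdev⟩ := hA
  have hsq : (n : ℝ) ^ 2 / r + γ₀ ^ 2 * (n : ℝ) ^ 2 ≤ ∑ A ∈ P.parts, (A.card : ℝ) ^ 2 := by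
    have h1 : γ₀ ^ 2 * (n : ℝ) ^ 2 ≤ ∑ A ∈ P.parts, ((A.card : ℝ) - (n : ℝ) / r) ^ 2 :=
      hAdev.trans (Finset.single_le_sum
        (f := fun B : Finset (Fin n) => ((B.card : ℝ) - (n : ℝ) / r) ^ 2)
        (fun B _ => sq_nonneg _) hAmem)
    linarith [hdev]
  have hle : ∑ A ∈ P.parts, A.card.choose 2 ≤ n.choose 2 := by
    calc ∑ A ∈ P.parts, A.card.choose 2 ≤ (∑ A ∈ P.parts, A.card).choose 2 :=
          sum_choose_two_le _ _
      _ = n.choose 2 := by rw [hsumn]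
  have hcast : (ePart P : ℝ) = (n.choose 2 : ℝ) - ∑ A ∈ P.parts, (A.card.choose 2 : ℝ) := by
    unfold ePart
    push_cast [Nat.cast_sub hle]
    ring
  have hch : ∀ k : ℕ, (k.choose 2 : ℝ) = (k : ℝ) * ((k : ℝ) - 1) / 2 := fun k =>
    Nat.cast_choose_two (K := ℝ) k
  have hsum2 : ∑ A ∈ P.parts, (A.card.choose 2 : ℝ)
      = ((∑ A ∈ P.parts, (A.card : ℝ) ^ 2) - (n : ℝ)) / 2 := by
    have hcongr : ∀ A ∈ P.parts, (A.card.choose 2 : ℝ) = ((A.card : ℝ) ^ 2 - (A.card : ℝ)) / 2 := by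
      intro A _; rw [hch]; ring
    rw [Finset.sum_congr rfl hcongr, ← Finset.sum_div, Finset.sum_sub_distrib, hsumR]
  rw [hcast, hsum2, hch]
  have ht : (1 / (r : ℝ)) * (n : ℝ) ^ 2 = (n : ℝ) ^ 2 / r := by ring
  nlinarith [hsq, ht]

/-! ### Counting partitions with `r` parts -/

/-- key of a part: the value of its minimum. -/
def pkey {n : ℕ} (A : Finset (Fin n)) : ℕ := if h : A.Nonempty then ((A.min' h : Fin n) : ℕ) else 0

lemma pkey_inj {n : ℕ} {P : Finpartition (Finset.univ : Finset (Fin n))} {A B : Finset (Fin n)}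
    (hA : A ∈ P.parts) (hB : B ∈ P.parts) (h : pkey A = pkey B) : A = B := by
  have hAne := P.nonempty_of_mem_parts hA
  have hBne := P.nonempty_of_mem_parts hB
  rw [pkey, pkey, dif_pos hAne, dif_pos hBne] at h
  have hmin : A.min' hAne = B.min' hBne := Fin.val_injective h
  exact P.eq_of_mem_parts hA hB (A.min'_mem hAne) (hmin ▸ B.min'_mem hBne)

/-- index of the part of `i` among parts, ordered by `pkey`. -/
def pidx {n : ℕ} (P : Finpartition (Finset.univ : Finset (Fin n))) (i : Fin n) : ℕ :=
  #(P.parts.filter fun A => pkey A < pkey (P.part i))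

lemma pidx_lt {n : ℕ} (P : Finpartition (Finset.univ : Finset (Fin n))) (i : Fin n) :
    pidx P i < #P.parts := by
  apply Finset.card_lt_card
  rw [Finset.ssubset_iff_of_subset (Finset.filter_subset _ _)]
  exact ⟨P.part i, P.part_mem.2 (mem_univ i), by simp⟩

lemma pidx_mono {n : ℕ} (P : Finpartition (Finset.univ : Finset (Fin n))) {i j : Fin n}
    (h : pkey (P.part i) < pkey (P.part j)) : pidx P i < pidx P j := by
  apply Finset.card_lt_card
  have hsub : P.parts.filter (fun A => pkey A < pkey (P.part i)) ⊆
      P.parts.filter (fun A => pkey A < pkey (P.part j)) := by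
    intro A hA
    rw [Finset.mem_filter] at hA ⊢
    exact ⟨hA.1, lt_trans hA.2 h⟩
  rw [Finset.ssubset_iff_of_subset hsub]
  exact ⟨P.part i, Finset.mem_filter.mpr ⟨P.part_mem.2 (mem_univ i), h⟩, by simp⟩

lemma pidx_eq_iff {n : ℕ} (P : Finpartition (Finset.univ : Finset (Fin n))) (i j : Fin n) :
    pidx P i = pidx P j ↔ P.part i = P.part j := by
  constructor
  · intro h
    by_contra hne
    have hkey : pkey (P.part i) ≠ pkey (P.part j) := fun hk =>
      hne (pkey_inj (P.part_mem.2 (mem_univ i)) (P.part_mem.2 (mem_univ j)) hk)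
    rcases lt_or_gt_of_ne hkey with hlt | hgt
    · exact absurd h (Nat.ne_of_lt (pidx_mono P hlt))
    · exact absurd h.symm (Nat.ne_of_lt (pidx_mono P hgt))
  · intro h; unfold pidx; rw [h]

lemma parts_eq_image {n : ℕ} (P : Finpartition (Finset.univ : Finset (Fin n))) :
    P.parts = Finset.univ.image P.part := by
  ext A
  simp only [Finset.mem_image]
  constructor
  · intro hA
    obtain ⟨a, ha⟩ := P.nonempty_of_mem_parts hA
    exact ⟨a, mem_univ a, P.part_eq_of_mem hA ha⟩
  · rintro ⟨a, -, rfl⟩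
    exact P.part_mem.2 (mem_univ a)

lemma card_partitions_le {n r : ℕ} (hr : 0 < r)
    (s : Finset (Finpartition (Finset.univ : Finset (Fin n))))
    (hs : ∀ P ∈ s, #P.parts = r) : #s ≤ r ^ n := by
  have hmap : ∀ P : Finpartition (Finset.univ : Finset (Fin n)), ∀ i : Fin n,
      pidx P i % r < r := fun P i => Nat.mod_lt _ hr
  set f : Finpartition (Finset.univ : Finset (Fin n)) → (Fin n → Fin r) :=
    fun P i => ⟨pidx P i % r, hmap P i⟩ with hf
  have hinj : Set.InjOn f ↑s := by
    intro P hP P' hP' hff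
    have hPr := hs P hP
    have hP'r := hs P' hP'
    have hidx : ∀ i, pidx P i = pidx P' i := by
      intro i
      have h1 := congrFun hff i
      have h2 : pidx P i % r = pidx P' i % r := by
        simpa [hf, Fin.ext_iff] using h1
      rwa [Nat.mod_eq_of_lt (hPr ▸ pidx_lt P i), Nat.mod_eq_of_lt (hP'r ▸ pidx_lt P' i)] at h2
    have hpart : ∀ i, P.part i = P'.part i := by
      intro i
      have fib : ∀ (Q : Finpartition (Finset.univ : Finset (Fin n))) (i : Fin n),
          Q.part i = Finset.univ.filter fun j => pidx Q j = pidx Q i := by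
        intro Q i
        ext j
        simp only [Finset.mem_filter, Finset.mem_univ, true_and]
        rw [pidx_eq_iff]
        exact Q.mem_part_iff_part_eq_part (mem_univ j) (mem_univ i)
      rw [fib P i, fib P' i]
      apply Finset.filter_congr
      intro j _
      rw [hidx j, hidx i]
    apply Finpartition.ext
    rw [parts_eq_image P, parts_eq_image P']
    exact Finset.image_congr fun i _ => hpart i
  calc #s ≤ #(Finset.univ : Finset (Fin n → Fin r)) :=
        Finset.card_le_card_of_injOn f (fun a _ => mem_univ _) hinj
    _ = r ^ n := by rw [Finset.card_univ, Fintype.card_fun, Fintype.card_fin, Fintype.card_fin]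

/-! ### Main theorem -/

theorem stmt7 (r : ℕ) (hr : 2 ≤ r) (γ : ℝ) (hγ : 0 < γ) :
    ∃ c : ℝ, ∀ ε' : ℝ, 0 < ε' → ∃ n₀ : ℕ, ∀ n, n₀ ≤ n → ∀ m : ℕ,
      c * (n : ℝ) ≤ (m : ℝ) → m ≤ exNum n (r + 1) →
      (∑ᶠ (P : Finpartition (Finset.univ : Finset (Fin n)))
          (_ : P.parts.card = r ∧ ¬ IsBalanced n r γ P), ((ePart P).choose m : ℝ)) ≤
        ε' * ((exNum n (r + 1)).choose m : ℝ) := by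
  classical
  have hr0 : 0 < r := by omega
  have hrR : (2 : ℝ) ≤ r := by exact_mod_cast hr
  have hrR0 : (0 : ℝ) < r := by linarith
  set γ₀ : ℝ := min γ (1 / (2 * r)) with hγ₀def
  have hγ₀pos : 0 < γ₀ := lt_min hγ (by positivity)
  have hγ₀le : γ₀ ≤ 1 / (2 * r) := min_le_right _ _
  have hγ₀γ : γ₀ ≤ γ := min_le_left _ _
  set δ : ℝ := γ₀ ^ 2 with hδdef
  have hδpos : 0 < δ := by positivity
  have hδlt : δ < 1 := by
    have h14 : (1 : ℝ) / (2 * r) ≤ 1 / 4 :=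
      one_div_le_one_div_of_le (by norm_num) (by linarith)
    nlinarith [hγ₀pos, hγ₀le]
  have h1δpos : (0 : ℝ) < 1 - δ := by linarith
  have h1δle : (1 : ℝ) - δ ≤ 1 := by linarith
  have hlog : Real.log (1 - δ) < 0 := Real.log_neg h1δpos (by linarith)
  set c : ℝ := (Real.log r + 1) / (-(Real.log (1 - δ))) with hcdef
  refine ⟨c, ?_⟩
  intro ε' hε'
  refine ⟨max (max (⌈(r : ℝ) / δ⌉₊ + 1) (⌈-Real.log ε'⌉₊ + 1)) 3, ?_⟩
  intro n hn m hm1 _hm2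
  set E := exNum n (r + 1) with hEdef
  have hn3 : 3 ≤ n := le_trans (le_max_right _ _) hn
  have hnR0 : (0 : ℝ) < n := by
    have hn0 : 0 < n := by omega
    exact_mod_cast hn0
  have hnr : (r : ℝ) / δ ≤ n := by
    have h1 : ⌈(r : ℝ) / δ⌉₊ ≤ n := by
      have := le_trans (le_trans (le_max_left _ _) (le_max_left _ _)) hn
      omega
    exact le_trans (Nat.le_ceil _) (by exact_mod_cast h1)
  have hnε : -Real.log ε' ≤ n := by
    have h1 : ⌈-Real.log ε'⌉₊ ≤ n := by
      have := le_trans (le_trans (le_max_right _ _) (le_max_left _ _)) hn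
      omega
    exact le_trans (Nat.le_ceil _) (by exact_mod_cast h1)
  -- lower bounds on E
  have hElow : (n : ℝ) * ((n : ℝ) - (n : ℝ) / r - 1) / 2 ≤ (E : ℝ) := exNum_lower n r hr
  have hn2 : (n : ℝ) / r ≤ (n : ℝ) / 2 := by
    apply div_le_div_of_nonneg_left hnR0.le (by norm_num) hrR
  have hn3R : (3 : ℝ) ≤ n := by exact_mod_cast hn3
  have hEposR : (0 : ℝ) < (E : ℝ) := by nlinarith
  have hEpos : 0 < E := by exact_mod_cast hEposR
  -- convert the finsum to a finite sum
  set S : Finset (Finpartition (Finset.univ : Finset (Fin n))) :=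
    Finset.univ.filter (fun P => P.parts.card = r ∧ ¬ IsBalanced n r γ P) with hSdef
  have hconv : (∑ᶠ (P : Finpartition (Finset.univ : Finset (Fin n)))
      (_ : P.parts.card = r ∧ ¬ IsBalanced n r γ P), ((ePart P).choose m : ℝ))
      = ∑ P ∈ S, ((ePart P).choose m : ℝ) := by
    rw [finsum_eq_sum_of_fintype]
    rw [hSdef, Finset.sum_filter]
    apply Finset.sum_congr rfl
    intro P _
    rw [finsum_eq_if]
  -- per-term bound
  have hterm : ∀ P ∈ S, ((ePart P).choose m : ℝ) ≤ (1 - δ) ^ m * (E.choose m : ℝ) := by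
    intro P hP
    obtain ⟨hPr, hPb⟩ := (Finset.mem_filter.mp hP).2
    -- extract an unbalanced part
    rw [IsBalanced] at hPb
    push_neg at hPb
    obtain ⟨A, hAmem, hAprop⟩ := hPb
    have hgn : γ₀ * (n : ℝ) ≤ γ * (n : ℝ) := mul_le_mul_of_nonneg_right hγ₀γ hnR0.le
    have hgn0 : (0 : ℝ) ≤ γ₀ * n := mul_nonneg hγ₀pos.le hnR0.le
    have hrw : ((1 : ℝ) / r) * n = (n : ℝ) / r := by ring
    have hdev : γ₀ ^ 2 * (n : ℝ) ^ 2 ≤ ((A.card : ℝ) - (n : ℝ) / r) ^ 2 := by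
      by_cases hlb : ((1 : ℝ) / r - γ) * n ≤ (A.card : ℝ)
      · have hub := hAprop hlb
        have hd : γ₀ * n ≤ (A.card : ℝ) - (n : ℝ) / r := by
          have hx : ((1 : ℝ) / r) * n + γ * n < (A.card : ℝ) := by
            have := hub; linarith [hub, (by ring : ((1 : ℝ) / r + γ) * n = (1 / (r:ℝ)) * n + γ * n)]
          linarith [hgn, hrw]
        calc γ₀ ^ 2 * (n : ℝ) ^ 2 = (γ₀ * n) * (γ₀ * n) := by ring
          _ ≤ ((A.card : ℝ) - (n : ℝ) / r) * ((A.card : ℝ) - (n : ℝ) / r) :=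
              mul_self_le_mul_self hgn0 hd
          _ = ((A.card : ℝ) - (n : ℝ) / r) ^ 2 := by ring
      · push_neg at hlb
        have hd : γ₀ * n ≤ (n : ℝ) / r - (A.card : ℝ) := by
          have hx : (A.card : ℝ) < ((1 : ℝ) / r) * n - γ * n := by
            linarith [hlb, (by ring : ((1 : ℝ) / r - γ) * n = (1 / (r:ℝ)) * n - γ * n)]
          linarith [hgn, hrw]
        calc γ₀ ^ 2 * (n : ℝ) ^ 2 = (γ₀ * n) * (γ₀ * n) := by ring
          _ ≤ ((n : ℝ) / r - (A.card : ℝ)) * ((n : ℝ) / r - (A.card : ℝ)) :=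
              mul_self_le_mul_self hgn0 hd
          _ = ((A.card : ℝ) - (n : ℝ) / r) ^ 2 := by ring
    have heP : (ePart P : ℝ) ≤ (1 - 1 / (r : ℝ) - γ₀ ^ 2) * (n : ℝ) ^ 2 / 2 :=
      ePart_le hr γ₀ P hPr ⟨A, hAmem, hdev⟩
    -- compare with (1-δ) E
    have ha : 1 / δ ≤ (n : ℝ) / r := by
      rw [div_le_div_iff₀ hδpos hrR0]
      rw [div_le_iff₀ hδpos] at hnr
      linarith
    have h1 : (1 : ℝ) ≤ δ * ((n : ℝ) / r) := by
      calc (1 : ℝ) = δ * (1 / δ) := by field_simp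
        _ ≤ δ * ((n : ℝ) / r) := mul_le_mul_of_nonneg_left ha hδpos.le
    have hstep : (1 - 1 / (r : ℝ) - δ) * (n : ℝ) ^ 2 / 2
        ≤ (1 - δ) * ((n : ℝ) * ((n : ℝ) - (n : ℝ) / r - 1) / 2) := by
      have hmul : (n : ℝ) * 1 ≤ (n : ℝ) * (δ * ((n : ℝ) / r)) :=
        mul_le_mul_of_nonneg_left h1 hnR0.le
      have hmul' : (n : ℝ) ≤ δ * ((n : ℝ) ^ 2 / r) := by
        calc (n : ℝ) = (n : ℝ) * 1 := by ring
          _ ≤ (n : ℝ) * (δ * ((n : ℝ) / r)) := hmul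
          _ = δ * ((n : ℝ) ^ 2 / r) := by ring
      have hδn : (0 : ℝ) ≤ δ * n := mul_nonneg hδpos.le hnR0.le
      have key : (1 - δ) * ((n : ℝ) * ((n : ℝ) - (n : ℝ) / r - 1) / 2)
          - (1 - 1 / (r : ℝ) - δ) * (n : ℝ) ^ 2 / 2
          = (δ * ((n : ℝ) ^ 2 / r) + δ * (n : ℝ) - (n : ℝ)) / 2 := by ring
      linarith [key, hmul', hδn]
    have hkey : (ePart P : ℝ) ≤ (1 - δ) * (E : ℝ) := by
      calc (ePart P : ℝ) ≤ (1 - 1 / (r : ℝ) - δ) * (n : ℝ) ^ 2 / 2 := by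
            rw [hδdef]; exact heP
        _ ≤ (1 - δ) * ((n : ℝ) * ((n : ℝ) - (n : ℝ) / r - 1) / 2) := hstep
        _ ≤ (1 - δ) * (E : ℝ) := mul_le_mul_of_nonneg_left hElow h1δpos.le
    exact choose_le_pow_mul_choose hEpos (by linarith) h1δle hkey
  -- count
  have hcount : #S ≤ r ^ n :=
    card_partitions_le hr0 S fun P hP => ((Finset.mem_filter.mp hP).2).1
  clear hSdef
  clear_value S
  clear_value E
  -- the exponential bound
  have hfin : (r : ℝ) ^ n * (1 - δ) ^ m ≤ ε' := by
    have e1 : ((1 : ℝ) - δ) ^ m = (1 - δ) ^ ((m : ℕ) : ℝ) := (Real.rpow_natCast _ m).symm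
    have e2 : (1 - δ) ^ ((m : ℕ) : ℝ) ≤ (1 - δ) ^ (c * (n : ℝ)) :=
      Real.rpow_le_rpow_of_exponent_ge h1δpos h1δle hm1
    have e3 : (1 - δ) ^ (c * (n : ℝ)) = Real.exp (Real.log (1 - δ) * (c * n)) := by
      rw [Real.rpow_def_of_pos h1δpos]
    have hc : Real.log (1 - δ) * c = -(Real.log r + 1) := by
      rw [hcdef]
      have hne : Real.log (1 - δ) ≠ 0 := ne_of_lt hlog
      have hne' : -Real.log (1 - δ) ≠ 0 := neg_ne_zero.mpr hne
      field_simp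
    have e4 : (r : ℝ) ^ n = Real.exp ((n : ℝ) * Real.log r) := by
      rw [← Real.log_pow, Real.exp_log (by positivity)]
    calc (r : ℝ) ^ n * (1 - δ) ^ m
        ≤ Real.exp ((n : ℝ) * Real.log r) * Real.exp (Real.log (1 - δ) * (c * n)) := by
          rw [e4]
          apply mul_le_mul_of_nonneg_left _ (Real.exp_pos _).le
          rw [e1, ← e3]
          exact e2
      _ = Real.exp ((n : ℝ) * Real.log r + (Real.log (1 - δ) * c) * n) := by
          rw [← Real.exp_add]; ring_nf
      _ = Real.exp (-(n : ℝ)) := by rw [hc]; ring_nf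
      _ ≤ ε' := by
          rw [← Real.exp_log hε']
          exact Real.exp_le_exp.mpr (by linarith)
  -- assemble
  calc (∑ᶠ (P : Finpartition (Finset.univ : Finset (Fin n)))
      (_ : P.parts.card = r ∧ ¬ IsBalanced n r γ P), ((ePart P).choose m : ℝ))
      = ∑ P ∈ S, ((ePart P).choose m : ℝ) := hconv
    _ ≤ #S • ((1 - δ) ^ m * (E.choose m : ℝ)) := Finset.sum_le_card_nsmul _ _ _ hterm
    _ = (#S : ℝ) * ((1 - δ) ^ m * (E.choose m : ℝ)) := nsmul_eq_mul _ _
    _ ≤ (r : ℝ) ^ n * ((1 - δ) ^ m * (E.choose m : ℝ)) := by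
        apply mul_le_mul_of_nonneg_right _ (by positivity)
        exact_mod_cast hcount
    _ = ((r : ℝ) ^ n * (1 - δ) ^ m) * (E.choose m : ℝ) := by ring
    _ ≤ ε' * (E.choose m : ℝ) := mul_le_mul_of_nonneg_right hfin (by positivity)
end

section
/- Let r ≥ 2 and n be integers, let Π be a partition of [n] = {1,…,n} into r parts, identified with the complete r-partite graph with those parts, and let ξ, δ ∈ (0,1]. Then for all integers m and t with 0 ≤ t ≤ δ·m and m ≤ e(Π) − ξ·n²: C(e(Π^c), t) · C(e(Π), m−t) ≤ (e/(ξ·δ))^{δ·m} · C(e(Π), m), where e on the right-hand side denotes Euler's number. -/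
open Finset

lemma step16 (E m t : ℕ) (h1 : t + 1 ≤ m) (h2 : m ≤ E) :
    (E - m) * E.choose (m - t - 1) ≤ m * E.choose (m - t) := by
  set k := m - t - 1 with hkdef
  have hk : m - t = k + 1 := by omega
  refine Nat.le_of_mul_le_mul_right ?_ (show 0 < E - k by omega)
  have hid := Nat.choose_succ_right_eq E k
  calc (E - m) * E.choose k * (E - k) = (E - m) * (E.choose k * (E - k)) := by ring
    _ = (E - m) * (E.choose (k + 1) * (k + 1)) := by rw [← hid]
    _ = ((E - m) * (k + 1)) * E.choose (k + 1) := by ring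
    _ ≤ ((E - k) * m) * E.choose (k + 1) :=
        Nat.mul_le_mul_right _ (Nat.mul_le_mul (by omega) (by omega))
    _ = m * E.choose (m - t) * (E - k) := by rw [hk]; ring

lemma ratio16 (E m : ℕ) (h2 : m ≤ E) :
    ∀ t, t ≤ m → (E - m) ^ t * E.choose (m - t) ≤ m ^ t * E.choose m
  | 0, _ => by simp
  | t + 1, h => by
    have hsub : m - (t + 1) = m - t - 1 := by omega
    calc (E - m) ^ (t + 1) * E.choose (m - (t + 1))
        = (E - m) ^ t * ((E - m) * E.choose (m - t - 1)) := by rw [hsub]; ring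
      _ ≤ (E - m) ^ t * (m * E.choose (m - t)) :=
          Nat.mul_le_mul_left _ (step16 E m t h h2)
      _ = m * ((E - m) ^ t * E.choose (m - t)) := by ring
      _ ≤ m * (m ^ t * E.choose m) :=
          Nat.mul_le_mul_left _ (ratio16 E m h2 t (Nat.le_of_succ_le h))
      _ = m ^ (t + 1) * E.choose m := by ring

set_option maxHeartbeats 2000000 in
theorem stmt16 (r n : ℕ) (hr : 2 ≤ r) (P : Finpartition (Finset.univ : Finset (Fin n)))
    (hP : P.parts.card = r) (ξ δ : ℝ) (hξ0 : 0 < ξ) (hξ1 : ξ ≤ 1) (hδ0 : 0 < δ) (hδ1 : δ ≤ 1)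
    (m t : ℕ) (ht0 : (t : ℝ) ≤ δ * (m : ℝ)) (hm : (m : ℝ) ≤ (ePart P : ℝ) - ξ * (n : ℝ) ^ 2) :
    ((n.choose 2 - ePart P).choose t : ℝ) * ((ePart P).choose (m - t) : ℝ) ≤
      (Real.exp 1 / (ξ * δ)) ^ (δ * (m : ℝ)) * ((ePart P).choose m : ℝ) := by
  obtain ⟨E, hEdef⟩ : ∃ E, ePart P = E := ⟨_, rfl⟩
  rw [hEdef] at hm ⊢
  set Ec := n.choose 2 - E with hEcdef
  set e := Real.exp 1 with hedef
  set A := e / (ξ * δ) with hAdef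
  have he1 : (1:ℝ) ≤ e := Real.one_le_exp zero_le_one
  have he0 : (0:ℝ) < e := lt_of_lt_of_le one_pos he1
  have hA1 : (1:ℝ) ≤ A := by
    rw [hAdef, le_div_iff₀ (by positivity)]
    nlinarith
  have hA0 : (0:ℝ) < A := lt_of_lt_of_le one_pos hA1
  have hC0 : (0:ℝ) ≤ ((E.choose m : ℕ) : ℝ) := Nat.cast_nonneg _
  have hδm0 : (0:ℝ) ≤ δ * m := by positivity
  have hmE : m ≤ E := by
    have : (m:ℝ) ≤ (E:ℝ) := by nlinarith
    exact_mod_cast this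
  rcases Nat.eq_zero_or_pos t with ht | ht
  · subst ht
    simp only [Nat.choose_zero_right, Nat.cast_one, one_mul, Nat.sub_zero]
    have h1 : (1:ℝ) ≤ A ^ (δ * (m:ℝ)) := by
      calc (1:ℝ) = A ^ (0:ℝ) := (Real.rpow_zero A).symm
        _ ≤ A ^ (δ * (m:ℝ)) := Real.rpow_le_rpow_of_exponent_le hA1 hδm0
    nlinarith
  -- t ≥ 1
  have htm : t ≤ m := by
    have : (t:ℝ) ≤ (m:ℝ) := by nlinarith
    exact_mod_cast this
  have hm0 : 0 < m := lt_of_lt_of_le ht htm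
  have ht0' : (0:ℝ) < t := by exact_mod_cast ht
  have hn : 0 < n := by
    by_contra hc
    push_neg at hc
    have h0 : n = 0 := by omega
    have hE1 : E ≤ n.choose 2 := hEdef ▸ Nat.sub_le _ _
    have hE0 : E = 0 := by rw [h0] at hE1; simpa using hE1
    have hm' : (m:ℝ) ≤ 0 := by rw [hE0, h0] at hm; push_cast at hm; linarith
    have hm'' : (0:ℝ) < m := by exact_mod_cast hm0
    linarith
  have hEm : ξ * (n:ℝ)^2 ≤ (E:ℝ) - m := by linarith
  have hEm0 : (0:ℝ) < (E:ℝ) - m := lt_of_lt_of_le (by positivity) hEm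
  have hEc_le : (Ec:ℝ) ≤ (n:ℝ)^2 := by
    have h1 : Ec ≤ n.choose 2 := Nat.sub_le _ _
    have h2 : n.choose 2 ≤ n ^ 2 := Nat.choose_le_pow n 2
    have : (Ec:ℝ) ≤ ((n^2 : ℕ) : ℝ) := by exact_mod_cast le_trans h1 h2
    simpa using this
  have hEc0 : (0:ℝ) ≤ (Ec:ℝ) := Nat.cast_nonneg _
  -- bound on C(Ec, t)
  have hexp_t : e ^ t = Real.exp t := by
    rw [hedef, ← Real.exp_nat_mul, mul_one]
  have hX : ((Ec.choose t : ℕ) : ℝ) ≤ (e * Ec / t) ^ t := by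
    have h1 : ((Ec.choose t : ℕ) : ℝ) ≤ (Ec:ℝ) ^ t / (t.factorial : ℝ) := by
      have := Nat.choose_le_pow_div (α := ℝ) t Ec
      push_cast at this ⊢
      convert this using 2
    have hfac : (0:ℝ) < (t.factorial : ℝ) := by exact_mod_cast t.factorial_pos
    have h2 : ((t:ℝ)) ^ t ≤ Real.exp t * (t.factorial : ℝ) := by
      have h3 := Real.pow_div_factorial_le_exp (x := (t:ℝ)) (by positivity) t
      rw [div_le_iff₀ hfac] at h3
      linarith
    calc ((Ec.choose t : ℕ) : ℝ) ≤ (Ec:ℝ) ^ t / (t.factorial : ℝ) := h1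
      _ ≤ Real.exp t * (Ec:ℝ) ^ t / ((t:ℝ)) ^ t := by
          rw [div_le_div_iff₀ hfac (by positivity)]
          nlinarith [mul_le_mul_of_nonneg_left h2 (pow_nonneg hEc0 t)]
      _ = (e * Ec / t) ^ t := by
          rw [div_pow, mul_pow, hexp_t]
  -- bound on C(E, m - t)
  have hY : ((E.choose (m - t) : ℕ) : ℝ) ≤ ((m:ℝ) / ((E:ℝ) - m)) ^ t * (E.choose m : ℝ) := by
    have h1 := ratio16 E m hmE t htm
    have h2 : (((E - m : ℕ)) : ℝ) = (E:ℝ) - m := by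
      rw [Nat.cast_sub hmE]
    have h3 : ((E:ℝ) - m) ^ t * ((E.choose (m - t) : ℕ) : ℝ) ≤ (m:ℝ) ^ t * (E.choose m : ℝ) := by
      have := (Nat.cast_le (α := ℝ)).2 h1
      push_cast at this
      rw [h2] at this
      exact this
    rw [div_pow, div_mul_eq_mul_div, le_div_iff₀ (by positivity), mul_comm]
    exact h3
  -- combine
  have hkey : ξ * (Ec:ℝ) ≤ (E:ℝ) - m := le_trans (by nlinarith) hEm
  have hbase : (e * Ec / t) * ((m:ℝ) / ((E:ℝ) - m)) ≤ A * (δ * m / t) := by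
    rw [hAdef, div_mul_div_comm, div_mul_div_comm, div_le_div_iff₀ (by positivity) (by positivity)]
    nlinarith [mul_le_mul_of_nonneg_left hkey (show (0:ℝ) ≤ e * δ * m * t by positivity)]
  have hgrow : (δ * m / t) ^ t ≤ Real.exp (δ * m - t) := by
    have hu : δ * (m:ℝ) / t = (δ * m - t) / t + 1 := by field_simp; ring
    calc (δ * m / t) ^ t ≤ (Real.exp ((δ * m - t) / t)) ^ t := by
          apply pow_le_pow_left₀ (by positivity)
          rw [hu]
          exact Real.add_one_le_exp _
      _ = Real.exp (t * ((δ * m - t) / t)) := (Real.exp_nat_mul _ t).symm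
      _ = Real.exp (δ * m - t) := by rw [mul_div_cancel₀ _ (ne_of_gt ht0')]
  have hAe : e ≤ A := by
    rw [hAdef, le_div_iff₀ (by positivity)]
    have h1 : ξ * δ ≤ 1 := by nlinarith
    nlinarith [mul_le_mul_of_nonneg_left h1 (le_of_lt he0)]
  have hfin : Real.exp (δ * m - t) ≤ A ^ (δ * m - (t:ℝ)) := by
    rw [← Real.exp_one_rpow (δ * m - t)]
    exact Real.rpow_le_rpow (le_of_lt he0) hAe (by linarith)
  calc ((Ec.choose t : ℕ) : ℝ) * ((E.choose (m - t) : ℕ) : ℝ)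
      ≤ (e * Ec / t) ^ t * (((m:ℝ) / ((E:ℝ) - m)) ^ t * (E.choose m : ℝ)) :=
        mul_le_mul hX hY (Nat.cast_nonneg _) (by positivity)
    _ = ((e * Ec / t) * ((m:ℝ) / ((E:ℝ) - m))) ^ t * (E.choose m : ℝ) := by
        rw [mul_pow]; ring
    _ ≤ (A * (δ * m / t)) ^ t * (E.choose m : ℝ) := by
        apply mul_le_mul_of_nonneg_right _ hC0
        exact pow_le_pow_left₀ (by positivity) hbase t
    _ = A ^ t * (δ * m / t) ^ t * (E.choose m : ℝ) := by rw [mul_pow]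
    _ ≤ A ^ t * A ^ (δ * m - (t:ℝ)) * (E.choose m : ℝ) := by
        apply mul_le_mul_of_nonneg_right _ hC0
        exact mul_le_mul_of_nonneg_left (le_trans hgrow hfin) (by positivity)
    _ = A ^ (δ * (m:ℝ)) * (E.choose m : ℝ) := by
        rw [← Real.rpow_natCast A t, ← Real.rpow_add hA0]
        ring_nf
end

section
/- Let k ≥ 1 be an integer, let α, λ ∈ (0,1), let V_1,…,V_k be finite sets, and let d be an integer with 2 ≤ d ≤ min{|V_1|,…,|V_k|}. Suppose H ⊆ V_1 × … × V_k satisfies |H| ≤ (α·λ)^k·∏_{i=1}^k |V_i|. Then the number of k-tuples (W_1,…,W_k), where each W_i is a d-element subset of V_i, for which |H ∩ (W_1 × … × W_k)| > k·λ·d^k, is at most (d^k − 1)·(2·α^λ)^d·∏_{i=1}^k C(|V_i|, d). -/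
open Finset

attribute [local instance] Classical.propDecidable

variable {γ : Type}

lemma L1 {m n : ℕ} (h : m ≤ n) (t : ℕ) :
    m.descFactorial t * n ^ t ≤ n.descFactorial t * m ^ t := by
  induction t with
  | zero => simp
  | succ t ih =>
    rw [Nat.descFactorial_succ, Nat.descFactorial_succ, pow_succ, pow_succ]
    have key : (m - t) * n ≤ (n - t) * m := by
      calc (m - t) * n = m * n - t * n := Nat.sub_mul _ _ _
        _ ≤ m * n - t * m := Nat.sub_le_sub_left (Nat.mul_le_mul_left t h) _
        _ = n * m - t * m := by rw [mul_comm m n]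
        _ = (n - t) * m := (Nat.sub_mul _ _ _).symm
    calc (m - t) * m.descFactorial t * (n ^ t * n)
        = ((m - t) * n) * (m.descFactorial t * n ^ t) := by ring
      _ ≤ ((n - t) * m) * (n.descFactorial t * m ^ t) := Nat.mul_le_mul key ih
      _ = (n - t) * n.descFactorial t * (m ^ t * m) := by ring

lemma L2 {m n : ℕ} (h : m ≤ n) (t : ℕ) :
    (m.choose t : ℝ) * (n : ℝ) ^ t ≤ (n.choose t : ℝ) * (m : ℝ) ^ t := by
  have hfac : (0:ℝ) < (Nat.factorial t : ℝ) := by positivity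
  rw [← mul_le_mul_iff_right₀ hfac]
  calc (t.factorial : ℝ) * ((m.choose t :ℝ) * (n:ℝ)^t)
      = ((m.descFactorial t * n ^ t : ℕ) : ℝ) := by
        rw [Nat.descFactorial_eq_factorial_mul_choose]; push_cast; ring
    _ ≤ ((n.descFactorial t * m ^ t : ℕ) : ℝ) := Nat.cast_le.mpr (L1 h t)
    _ = (t.factorial : ℝ) * ((n.choose t:ℝ) * (m:ℝ)^t) := by
        rw [Nat.descFactorial_eq_factorial_mul_choose]; push_cast; ring

-- L0: number of d-subsets of V containing T
lemma L0 {T V : Finset γ} (hTV : T ⊆ V) {d : ℕ} (htd : T.card ≤ d) :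
    ((V.powersetCard d).filter (fun W => T ⊆ W)).card
      = (V.card - T.card).choose (d - T.card) := by
  classical
  rw [← Finset.card_sdiff_of_subset hTV, ← Finset.card_powersetCard]
  apply Finset.card_bij' (fun W _ => W \ T) (fun U _ => U ∪ T)
  · intro W hW
    simp only [mem_filter, mem_powersetCard] at hW
    simp only [mem_powersetCard]
    exact ⟨sdiff_subset_sdiff hW.1.1 le_rfl, by rw [card_sdiff_of_subset hW.2, hW.1.2]⟩
  · intro U hU
    simp only [mem_powersetCard] at hU
    have hdisj : Disjoint U T := disjoint_of_subset_left hU.1 (sdiff_disjoint)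
    simp only [mem_filter, mem_powersetCard]
    refine ⟨⟨union_subset (hU.1.trans sdiff_subset) hTV, ?_⟩, subset_union_right⟩
    rw [card_union_of_disjoint hdisj, hU.2]
    omega
  · intro W hW
    simp only [mem_filter] at hW
    exact sdiff_union_of_subset hW.2
  · intro U hU
    simp only [mem_powersetCard] at hU
    have hdisj : Disjoint U T := disjoint_of_subset_left hU.1 (sdiff_disjoint)
    rw [union_sdiff_right, sdiff_eq_self_of_disjoint hdisj]

-- L3: hypergeometric tail bound
lemma L3 {B V : Finset γ} (hBV : B ⊆ V) {c : ℝ} (hc : 0 ≤ c)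
    (hBc : (B.card : ℝ) ≤ c * V.card) {t d : ℕ} (htd : t ≤ d) (hdn : d ≤ V.card)
    (hn : 0 < V.card) :
    ((((V.powersetCard d).filter (fun W => t ≤ (W ∩ B).card)).card : ℝ))
      ≤ c ^ t * (d.choose t) * (V.card.choose d) := by
  classical
  have step1 : (((V.powersetCard d).filter (fun W => t ≤ (W ∩ B).card)).card : ℕ)
      ≤ B.card.choose t * (V.card - t).choose (d - t) := by
    have hsub : ((V.powersetCard d).filter (fun W => t ≤ (W ∩ B).card))
        ⊆ (B.powersetCard t).biUnion (fun T => (V.powersetCard d).filter (fun W => T ⊆ W)) := by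
      intro W hW
      simp only [mem_filter, mem_powersetCard] at hW
      obtain ⟨T, hT, hTcard⟩ := Finset.exists_subset_card_eq hW.2
      simp only [mem_biUnion, mem_powersetCard, mem_filter]
      exact ⟨T, ⟨hT.trans inter_subset_right, hTcard⟩,
        ⟨hW.1, hT.trans inter_subset_left⟩⟩
    calc _ ≤ _ := Finset.card_le_card hsub
      _ ≤ ∑ T ∈ B.powersetCard t, ((V.powersetCard d).filter (fun W => T ⊆ W)).card :=
          Finset.card_biUnion_le
      _ = ∑ T ∈ B.powersetCard t, (V.card - t).choose (d - t) := by
          apply Finset.sum_congr rfl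
          intro T hT
          simp only [mem_powersetCard] at hT
          rw [L0 (hT.1.trans hBV) (hT.2 ▸ htd), hT.2]
      _ = B.card.choose t * (V.card - t).choose (d - t) := by
          rw [Finset.sum_const, Finset.card_powersetCard, smul_eq_mul]
  have hbn : B.card ≤ V.card := Finset.card_le_card hBV
  have hch : (B.card.choose t : ℝ) ≤ c ^ t * (V.card.choose t : ℝ) := by
    have h2 := L2 hbn t
    have hb : ((B.card : ℝ)) ^ t ≤ (c * V.card) ^ t := by
      apply pow_le_pow_left₀ (by positivity) hBc
    have hnr : (0:ℝ) < (V.card : ℝ) ^ t := by positivity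
    rw [← mul_le_mul_iff_left₀ hnr]
    calc (B.card.choose t : ℝ) * (V.card:ℝ)^t ≤ (V.card.choose t : ℝ) * (B.card:ℝ)^t := h2
      _ ≤ (V.card.choose t : ℝ) * (c * V.card)^t := by
          apply mul_le_mul_of_nonneg_left hb (by positivity)
      _ = c ^ t * (V.card.choose t : ℝ) * (V.card:ℝ)^t := by rw [mul_pow]; ring
  have hid : (V.card.choose t : ℝ) * ((V.card - t).choose (d - t) : ℝ)
      = (V.card.choose d : ℝ) * (d.choose t : ℝ) := by
    rw [← Nat.cast_mul, ← Nat.cast_mul, ← Nat.choose_mul htd]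
  calc ((((V.powersetCard d).filter (fun W => t ≤ (W ∩ B).card)).card : ℝ))
      ≤ (B.card.choose t : ℝ) * ((V.card - t).choose (d - t) : ℝ) := by
        exact_mod_cast Nat.cast_le.mpr step1
    _ ≤ (c ^ t * (V.card.choose t : ℝ)) * ((V.card - t).choose (d - t) : ℝ) := by
        apply mul_le_mul_of_nonneg_right hch (by positivity)
    _ = c ^ t * ((V.card.choose t : ℝ) * ((V.card - t).choose (d - t) : ℝ)) := by ring
    _ = c ^ t * ((V.card.choose d : ℝ) * (d.choose t : ℝ)) := by rw [hid]
    _ = c ^ t * (d.choose t) * (V.card.choose d) := by ring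

-- N1: numeric bound
lemma N1 {α lam : ℝ} (hα : α ∈ Set.Ioo (0:ℝ) 1) (hlam : lam ∈ Set.Ioo (0:ℝ) 1)
    {d t : ℕ} (ht : lam * d ≤ t) (htd : t ≤ d) :
    (α * lam) ^ t * (d.choose t : ℝ) ≤ (2 * α ^ lam) ^ d := by
  obtain ⟨hα0, hα1⟩ := hα
  obtain ⟨hl0, hl1⟩ := hlam
  have hchoose : (d.choose t : ℝ) ≤ (2:ℝ) ^ d := by
    have h1 : d.choose t ≤ ∑ m ∈ Finset.range (d+1), d.choose m :=
      Finset.single_le_sum (f := fun m => d.choose m) (fun _ _ => Nat.zero_le _)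
        (Finset.mem_range.mpr (Nat.lt_succ_of_le htd))
    rw [Nat.sum_range_choose] at h1
    exact_mod_cast h1
  have hal : (α * lam) ^ t ≤ α ^ (lam * d) := by
    calc (α * lam) ^ t ≤ α ^ t := by
          apply pow_le_pow_left₀ (by positivity)
          nlinarith
      _ = α ^ (t : ℝ) := (Real.rpow_natCast α t).symm
      _ ≤ α ^ (lam * d) := Real.rpow_le_rpow_of_exponent_ge hα0 hα1.le ht
  have hre : (2 * α ^ lam) ^ d = 2 ^ d * α ^ (lam * d) := by
    rw [mul_pow]
    congr 1
    rw [← Real.rpow_natCast (α ^ lam) d, ← Real.rpow_mul hα0.le]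
  rw [hre]
  calc (α * lam) ^ t * (d.choose t : ℝ) ≤ α ^ (lam * d) * (2:ℝ)^d := by
        apply mul_le_mul hal hchoose (by positivity) (Real.rpow_pos_of_pos hα0 _).le
    _ = 2 ^ d * α ^ (lam * d) := by ring

lemma ext_last {k : ℕ} {δ : Type*} {f g : Fin (k+1) → δ}
    (h1 : ∀ j : Fin k, f j.castSucc = g j.castSucc) (h2 : f (Fin.last k) = g (Fin.last k)) :
    f = g :=
  funext (Fin.lastCases h2 h1)

set_option maxHeartbeats 1000000 in
lemma key (α lam : ℝ) (hα : α ∈ Set.Ioo (0:ℝ) 1) (hlam : lam ∈ Set.Ioo (0:ℝ) 1)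
    (d : ℕ) (hd2 : 2 ≤ d) :
    ∀ (k : ℕ), 1 ≤ k → ∀ (V : Fin k → Finset γ) (H : Finset (Fin k → γ)),
      (∀ i, d ≤ (V i).card) → (∀ f ∈ H, ∀ i, f i ∈ V i) →
      ((H.card : ℝ) ≤ (α * lam) ^ k * ∏ i, ((V i).card : ℝ)) →
      ((((Fintype.piFinset fun i => (V i).powersetCard d)).filter
          (fun W => (k : ℝ) * lam * (d : ℝ) ^ k <
            ((H.filter fun f => ∀ i, f i ∈ W i).card : ℝ))).card : ℝ)
        ≤ ((d : ℝ) ^ k - 1) * (2 * α ^ lam) ^ d * ∏ i, (((V i).card.choose d) : ℝ) := by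
  classical
  -- basic facts about t
  obtain ⟨hα0, hα1⟩ := hα
  obtain ⟨hl0, hl1⟩ := hlam
  have hd0 : (0:ℝ) < d := by positivity
  set t : ℕ := Nat.floor (lam * d) + 1 with ht_def
  have ht_gt : lam * (d:ℝ) < t := by
    rw [ht_def]
    push_cast
    exact Nat.lt_floor_add_one (lam * (d:ℝ))
  have ht_le_d : t ≤ d := by
    have : lam * (d:ℝ) < d := by nlinarith
    have h2 : Nat.floor (lam * (d:ℝ)) < d := by
      rw [Nat.floor_lt (by positivity)]
      exact this
    omega
  have ht_ge : ∀ c : ℕ, lam * (d:ℝ) < c → t ≤ c := by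
    intro c hc
    have : Nat.floor (lam * (d:ℝ)) < c := by
      rw [Nat.floor_lt (by positivity)]
      exact hc
    omega
  intro k
  induction k with
  | zero => omega
  | succ k ih =>
    intro _ V H hdV hsub hcard
    rcases Nat.eq_zero_or_pos k with rfl | hk1
    · -- base case : Fin 1
      set Hp : Finset γ := H.image (fun f => f 0) with hHp_def
      have hinj1 : ∀ (f g : Fin (0+1) → γ), f 0 = g 0 → f = g := by
        intro f g h
        funext i
        have hi : i = 0 := Fin.fin_one_eq_zero i
        rw [hi]; exact h
      have hHpcard : Hp.card = H.card :=
        Finset.card_image_of_injOn (fun f _ g _ h => hinj1 f g h)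
      have hHpV : Hp ⊆ V 0 := by
        intro v hv
        rw [hHp_def, Finset.mem_image] at hv
        obtain ⟨f, hf, rfl⟩ := hv
        exact hsub f hf 0
      have sub1 : ((Fintype.piFinset fun i => (V i).powersetCard d)).filter
            (fun W => ((0+1 : ℕ) : ℝ) * lam * (d : ℝ) ^ (0+1) <
              ((H.filter fun f => ∀ i, f i ∈ W i).card : ℝ))
          ⊆ Fintype.piFinset (fun i => ((V i).powersetCard d).filter
              (fun s => t ≤ (s ∩ Hp).card)) := by
        intro W hW
        rw [Finset.mem_filter] at hW
        obtain ⟨hW1, hW2⟩ := hW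
        rw [Fintype.mem_piFinset] at hW1 ⊢
        intro i
        have hi : i = 0 := Fin.fin_one_eq_zero i
        subst hi
        rw [Finset.mem_filter]
        refine ⟨hW1 0, ?_⟩
        have hmap : (H.filter (fun f => ∀ i, f i ∈ W i)).card ≤ ((W 0) ∩ Hp).card := by
          apply Finset.card_le_card_of_injOn (fun f => f 0)
          · intro f hf
            rw [Finset.mem_coe, Finset.mem_filter] at hf
            exact Finset.mem_inter.mpr ⟨hf.2 0, Finset.mem_image.mpr ⟨f, hf.1, rfl⟩⟩
          · intro f _ g _ h
            exact hinj1 f g h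
        apply ht_ge
        have hmap' : ((H.filter (fun f => ∀ i, f i ∈ W i)).card : ℝ)
            ≤ (((W 0) ∩ Hp).card : ℝ) := Nat.cast_le.mpr hmap
        push_cast at hW2
        nlinarith
      have hBc : (Hp.card : ℝ) ≤ (α * lam) * ((V 0).card : ℝ) := by
        rw [hHpcard]
        calc (H.card : ℝ) ≤ (α * lam) ^ (0+1) * ∏ i, ((V i).card : ℝ) := hcard
          _ = (α * lam) * ((V 0).card : ℝ) := by
              rw [pow_one, Fin.prod_univ_one]
      have hL3 := L3 (B := Hp) (V := V 0) hHpV (by positivity) hBc ht_le_d (hdV 0)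
        (lt_of_lt_of_le (by omega) (hdV 0))
      have hN1 := N1 ⟨hα0, hα1⟩ ⟨hl0, hl1⟩ ht_gt.le ht_le_d
      have hposC : (0:ℝ) ≤ (((V 0).card.choose d : ℕ) : ℝ) := by positivity
      have hpos2 : (0:ℝ) ≤ (2 * α ^ lam) ^ d := by positivity
      calc ((((Fintype.piFinset fun i => (V i).powersetCard d)).filter
            (fun W => ((0+1 : ℕ) : ℝ) * lam * (d : ℝ) ^ (0+1) <
              ((H.filter fun f => ∀ i, f i ∈ W i).card : ℝ))).card : ℝ)
          ≤ ((Fintype.piFinset (fun i : Fin (0+1) => ((V i).powersetCard d).filter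
              (fun s => t ≤ (s ∩ Hp).card))).card : ℝ) :=
            Nat.cast_le.mpr (Finset.card_le_card sub1)
        _ = ((((V 0).powersetCard d).filter (fun s => t ≤ (s ∩ Hp).card)).card : ℝ) := by
            rw [Fintype.card_piFinset, Fin.prod_univ_one]
        _ ≤ (α * lam) ^ t * (d.choose t : ℝ) * ((V 0).card.choose d : ℝ) := hL3
        _ ≤ (2 * α ^ lam) ^ d * ((V 0).card.choose d : ℝ) :=
            mul_le_mul_of_nonneg_right hN1 hposC
        _ ≤ ((d : ℝ) ^ (0+1) - 1) * (2 * α ^ lam) ^ d *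
              ∏ i : Fin (0+1), (((V i).card.choose d : ℕ) : ℝ) := by
            rw [Fin.prod_univ_one, pow_one]
            have hd1 : (1:ℝ) ≤ (d:ℝ) - 1 := by
              have : (2:ℝ) ≤ (d:ℝ) := by exact_mod_cast hd2
              linarith
            nlinarith [mul_nonneg hpos2 hposC]
    · -- inductive step
      set lst := Fin.last k with hlst
      set Hfib : γ → Finset (Fin k → γ) :=
        fun w => (H.filter (fun f => f lst = w)).image (fun f => f ∘ Fin.castSucc) with hHfib
      have hext : ∀ (f g : Fin (k+1) → γ), f lst = g lst →
          f ∘ Fin.castSucc = g ∘ Fin.castSucc → f = g := by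
        intro f g h2 h1
        exact ext_last (congrFun h1) h2
      have hfibcard : ∀ w, (Hfib w).card = (H.filter (fun f => f lst = w)).card := by
        intro w
        apply Finset.card_image_of_injOn
        intro f hf g hg h
        rw [Finset.mem_coe, Finset.mem_filter] at hf hg
        exact hext f g (hf.2.trans hg.2.symm) h
      have hfibsub : ∀ w, ∀ g ∈ Hfib w, ∀ j : Fin k, g j ∈ V j.castSucc := by
        intro w g hg j
        rw [hHfib, Finset.mem_image] at hg
        obtain ⟨f, hf, rfl⟩ := hg
        exact hsub f (Finset.mem_filter.1 hf).1 j.castSucc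
      have hsumV : ∑ w ∈ V lst, (H.filter (fun f => f lst = w)).card = H.card :=
        (Finset.card_eq_sum_card_fiberwise (fun f hf => hsub f hf lst)).symm
      set c0 : ℝ := (α * lam) ^ k * ∏ j : Fin k, ((V j.castSucc).card : ℝ) with hc0
      have hcardpos : ∀ i : Fin (k+1), (0:ℝ) < ((V i).card : ℝ) := by
        intro i
        have h1 := hdV i
        have h2 : 0 < (V i).card := Nat.lt_of_lt_of_le (Nat.lt_of_lt_of_le Nat.zero_lt_two hd2) h1
        exact_mod_cast h2
      have hc0pos : 0 < c0 := by
        rw [hc0]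
        apply mul_pos (by positivity)
        exact Finset.prod_pos (fun j _ => hcardpos j.castSucc)
      set Heavy : Finset γ := (V lst).filter (fun w => c0 < ((Hfib w).card : ℝ)) with hHeavy
      have hHeavysub : Heavy ⊆ V lst := Finset.filter_subset _ _
      have hHeavycard : (Heavy.card : ℝ) ≤ (α * lam) * ((V lst).card : ℝ) := by
        have h1 : (Heavy.card : ℝ) * c0 ≤ (H.card : ℝ) := by
          calc (Heavy.card : ℝ) * c0 = Heavy.card • c0 := (nsmul_eq_mul _ _).symm
            _ ≤ ∑ w ∈ Heavy, ((Hfib w).card : ℝ) := by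
                apply Finset.card_nsmul_le_sum
                intro w hw
                rw [hHeavy, Finset.mem_filter] at hw
                exact hw.2.le
            _ ≤ ∑ w ∈ V lst, ((Hfib w).card : ℝ) :=
                Finset.sum_le_sum_of_subset_of_nonneg hHeavysub (fun _ _ _ => by positivity)
            _ = (H.card : ℝ) := by
                rw [← Nat.cast_sum]
                congr 1
                rw [← hsumV]
                exact Finset.sum_congr rfl (fun w _ => hfibcard w)
        have h2 : (H.card : ℝ) ≤ ((α * lam) * ((V lst).card : ℝ)) * c0 := by
          calc (H.card : ℝ) ≤ (α * lam) ^ (k+1) * ∏ i, ((V i).card : ℝ) := hcard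
            _ = ((α * lam) * ((V lst).card : ℝ)) * c0 := by
                rw [Fin.prod_univ_castSucc, pow_succ, hc0]
                ring
        exact le_of_mul_le_mul_right (h1.trans h2) hc0pos
      have hlight : ∀ w, w ∉ Heavy → w ∈ V lst → ((Hfib w).card : ℝ) ≤ c0 := by
        intro w hw hwV
        rw [hHeavy, Finset.mem_filter] at hw
        push_neg at hw
        exact hw hwV
      have hdecomp : ∀ W : Fin (k+1) → Finset γ, (∀ i, W i ∈ (V i).powersetCard d) →
          (H.filter (fun f => ∀ i, f i ∈ W i)).card
            = ∑ w ∈ W lst, ((Hfib w).filter (fun g => ∀ j : Fin k, g j ∈ W j.castSucc)).card := by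
        intro W hW
        have hmaps : ∀ f ∈ H.filter (fun f => ∀ i, f i ∈ W i), f lst ∈ W lst :=
          fun f hf => (Finset.mem_filter.1 hf).2 lst
        rw [Finset.card_eq_sum_card_fiberwise hmaps]
        apply Finset.sum_congr rfl
        intro w hw
        apply Finset.card_bij (fun f _ => f ∘ Fin.castSucc)
        · intro f hf
          simp only [Finset.mem_filter] at hf ⊢
          refine ⟨?_, fun j => hf.1.2 j.castSucc⟩
          rw [hHfib, Finset.mem_image]
          exact ⟨f, Finset.mem_filter.mpr ⟨hf.1.1, hf.2⟩, rfl⟩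
        · intro f hf g hg h
          simp only [Finset.mem_filter] at hf hg
          exact hext f g (hf.2.trans hg.2.symm) h
        · intro g hg
          simp only [Finset.mem_filter] at hg
          obtain ⟨hg1, hg2⟩ := hg
          rw [hHfib, Finset.mem_image] at hg1
          obtain ⟨f, hf, rfl⟩ := hg1
          rw [Finset.mem_filter] at hf
          refine ⟨f, ?_, rfl⟩
          simp only [Finset.mem_filter]
          refine ⟨⟨hf.1, ?_⟩, hf.2⟩
          intro i
          refine Fin.lastCases ?_ ?_ i
          · rw [← hlst, hf.2]; exact hw
          · intro j; exact hg2 j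
      have hcap : ∀ (w : γ) (W : Fin (k+1) → Finset γ), (∀ i, W i ∈ (V i).powersetCard d) →
          ((Hfib w).filter (fun g => ∀ j : Fin k, g j ∈ W j.castSucc)).card ≤ d ^ k := by
        intro w W hW
        calc ((Hfib w).filter (fun g => ∀ j : Fin k, g j ∈ W j.castSucc)).card
            ≤ (Fintype.piFinset (fun j : Fin k => W j.castSucc)).card := by
              apply Finset.card_le_card
              intro g hg
              rw [Fintype.mem_piFinset]
              exact (Finset.mem_filter.1 hg).2
          _ = ∏ j : Fin k, (W j.castSucc).card := Fintype.card_piFinset _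
          _ = ∏ j : Fin k, d := Finset.prod_congr rfl
              (fun j _ => (Finset.mem_powersetCard.1 (hW j.castSucc)).2)
          _ = d ^ k := by rw [Finset.prod_const, Finset.card_univ, Fintype.card_fin]
      set pf := Fintype.piFinset (fun i : Fin (k+1) => (V i).powersetCard d) with hpf
      set PA : (Fin (k+1) → Finset γ) → Prop := fun W => t ≤ ((W lst ∩ Heavy)).card with hPA
      set PB : (Fin (k+1) → Finset γ) → Prop := fun W => ∃ w ∈ V lst \ Heavy, w ∈ W lst ∧
        (k : ℝ) * lam * (d : ℝ) ^ k <
          (((Hfib w).filter (fun g => ∀ j : Fin k, g j ∈ W j.castSucc)).card : ℝ) with hPB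
      have hAB : pf.filter (fun W => ((k+1 : ℕ) : ℝ) * lam * (d : ℝ) ^ (k+1) <
            ((H.filter fun f => ∀ i, f i ∈ W i).card : ℝ))
          ⊆ (pf.filter PA) ∪ (pf.filter PB) := by
        intro W hW
        rw [Finset.mem_filter] at hW
        obtain ⟨hW1, hW2⟩ := hW
        have hWmem := Fintype.mem_piFinset.1 hW1
        rw [Finset.mem_union, Finset.mem_filter, Finset.mem_filter]
        by_cases hA : PA W
        · exact Or.inl ⟨hW1, hA⟩
        right
        refine ⟨hW1, ?_⟩
        by_contra hB
        simp only [hPB, not_exists, not_and, not_lt] at hB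
        have hWlst : W lst ⊆ V lst := (Finset.mem_powersetCard.1 (hWmem lst)).1
        have hWlstcard : (W lst).card = d := (Finset.mem_powersetCard.1 (hWmem lst)).2
        have hAcard : ((W lst ∩ Heavy).card : ℝ) ≤ lam * d := by
          have hA' : (W lst ∩ Heavy).card < t := by
            rw [hPA] at hA
            exact Nat.lt_of_not_le hA
          rw [ht_def] at hA'
          have h1 : (W lst ∩ Heavy).card ≤ Nat.floor (lam * (d:ℝ)) := Nat.lt_succ_iff.mp hA'
          calc ((W lst ∩ Heavy).card : ℝ) ≤ (Nat.floor (lam * (d:ℝ)) : ℝ) := Nat.cast_le.mpr h1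
            _ ≤ lam * d := Nat.floor_le (by positivity)
        have hheavysum : ∑ w ∈ W lst ∩ Heavy,
            (((Hfib w).filter (fun g => ∀ j : Fin k, g j ∈ W j.castSucc)).card : ℝ)
              ≤ ((W lst ∩ Heavy).card : ℝ) * (d:ℝ)^k := by
          calc ∑ w ∈ W lst ∩ Heavy,
              (((Hfib w).filter (fun g => ∀ j : Fin k, g j ∈ W j.castSucc)).card : ℝ)
              ≤ ∑ w ∈ W lst ∩ Heavy, ((d:ℝ)^k) := by
                apply Finset.sum_le_sum
                intro w hw
                have h3 := hcap w W hWmem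
                calc (((Hfib w).filter (fun g => ∀ j : Fin k, g j ∈ W j.castSucc)).card : ℝ)
                    ≤ ((d^k : ℕ) : ℝ) := Nat.cast_le.mpr h3
                  _ = (d:ℝ)^k := by push_cast; ring
            _ = ((W lst ∩ Heavy).card : ℝ) * (d:ℝ)^k := by
                rw [Finset.sum_const, nsmul_eq_mul]
        have hlightsum : ∑ w ∈ W lst \ Heavy,
            (((Hfib w).filter (fun g => ∀ j : Fin k, g j ∈ W j.castSucc)).card : ℝ)
              ≤ (d:ℝ) * ((k : ℝ) * lam * (d : ℝ) ^ k) := by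
          calc ∑ w ∈ W lst \ Heavy,
              (((Hfib w).filter (fun g => ∀ j : Fin k, g j ∈ W j.castSucc)).card : ℝ)
              ≤ ∑ w ∈ W lst \ Heavy, ((k : ℝ) * lam * (d : ℝ) ^ k) := by
                apply Finset.sum_le_sum
                intro w hw
                rw [Finset.mem_sdiff] at hw
                have hwV : w ∈ V lst \ Heavy :=
                  Finset.mem_sdiff.mpr ⟨hWlst hw.1, hw.2⟩
                exact hB w hwV hw.1
            _ = ((W lst \ Heavy).card : ℝ) * ((k : ℝ) * lam * (d : ℝ) ^ k) := by
                rw [Finset.sum_const, nsmul_eq_mul]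
            _ ≤ (d:ℝ) * ((k : ℝ) * lam * (d : ℝ) ^ k) := by
                apply mul_le_mul_of_nonneg_right _ (by positivity)
                have h4 : (W lst \ Heavy).card ≤ d := by
                  calc (W lst \ Heavy).card ≤ (W lst).card := Finset.card_le_card sdiff_subset
                    _ = d := hWlstcard
                exact_mod_cast h4
        have htotal : ((H.filter (fun f => ∀ i, f i ∈ W i)).card : ℝ)
            ≤ ((k:ℝ) + 1) * lam * (d : ℝ) ^ (k+1) := by
          rw [hdecomp W hWmem]
          rw [Nat.cast_sum]
          rw [← Finset.sum_inter_add_sum_sdiff (W lst) Heavy]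
          calc (∑ w ∈ W lst ∩ Heavy,
                (((Hfib w).filter (fun g => ∀ j : Fin k, g j ∈ W j.castSucc)).card : ℝ))
              + ∑ w ∈ W lst \ Heavy,
                (((Hfib w).filter (fun g => ∀ j : Fin k, g j ∈ W j.castSucc)).card : ℝ)
              ≤ ((W lst ∩ Heavy).card : ℝ) * (d:ℝ)^k + (d:ℝ) * ((k : ℝ) * lam * (d : ℝ) ^ k) :=
                add_le_add hheavysum hlightsum
            _ ≤ (lam * d) * (d:ℝ)^k + (d:ℝ) * ((k : ℝ) * lam * (d : ℝ) ^ k) := by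
                apply add_le_add_left
                apply mul_le_mul_of_nonneg_right hAcard (by positivity)
            _ = ((k:ℝ) + 1) * lam * (d : ℝ) ^ (k+1) := by ring
        push_cast at hW2
        linarith
      have hAcount : ((pf.filter PA).card : ℝ)
          ≤ (2 * α ^ lam) ^ d * ∏ i : Fin (k+1), (((V i).card.choose d : ℕ) : ℝ) := by
        set g : Fin (k+1) → Finset (Finset γ) := fun i =>
          Fin.lastCases (((V lst).powersetCard d).filter (fun s => t ≤ (s ∩ Heavy).card))
            (fun j => (V j.castSucc).powersetCard d) i with hg
        have hsub2 : pf.filter PA ⊆ Fintype.piFinset g := by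
          intro W hW
          rw [Finset.mem_filter] at hW
          rw [Fintype.mem_piFinset]
          intro i
          refine Fin.lastCases ?_ ?_ i
          · rw [hg]
            simp only [Fin.lastCases_last]
            exact Finset.mem_filter.mpr ⟨(Fintype.mem_piFinset.1 hW.1) lst, hW.2⟩
          · intro j
            rw [hg]
            simp only [Fin.lastCases_castSucc]
            exact (Fintype.mem_piFinset.1 hW.1) j.castSucc
        have hcardg : ((Fintype.piFinset g).card : ℝ)
            = ((((V lst).powersetCard d).filter (fun s => t ≤ (s ∩ Heavy).card)).card : ℝ)
              * ∏ j : Fin k, (((V j.castSucc).card.choose d : ℕ) : ℝ) := by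
          rw [Fintype.card_piFinset, Nat.cast_prod, Fin.prod_univ_castSucc]
          rw [hg]
          simp only [Fin.lastCases_last, Fin.lastCases_castSucc]
          rw [mul_comm]
          congr 1
          apply Finset.prod_congr rfl
          intro j _
          rw [Finset.card_powersetCard]
        have hL3 := L3 (B := Heavy) (V := V lst) hHeavysub (by positivity) hHeavycard
          ht_le_d (hdV lst) (Nat.lt_of_lt_of_le (Nat.lt_of_lt_of_le Nat.zero_lt_two hd2) (hdV lst))
        have hN1 := N1 ⟨hα0, hα1⟩ ⟨hl0, hl1⟩ ht_gt.le ht_le_d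
        have hprodnn : (0:ℝ) ≤ ∏ j : Fin k, (((V j.castSucc).card.choose d : ℕ) : ℝ) := by
          positivity
        calc ((pf.filter PA).card : ℝ) ≤ ((Fintype.piFinset g).card : ℝ) :=
              Nat.cast_le.mpr (Finset.card_le_card hsub2)
          _ = ((((V lst).powersetCard d).filter (fun s => t ≤ (s ∩ Heavy).card)).card : ℝ)
              * ∏ j : Fin k, (((V j.castSucc).card.choose d : ℕ) : ℝ) := hcardg
          _ ≤ ((α * lam) ^ t * (d.choose t : ℝ) * (((V lst).card.choose d : ℕ) : ℝ))
              * ∏ j : Fin k, (((V j.castSucc).card.choose d : ℕ) : ℝ) :=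
              mul_le_mul_of_nonneg_right hL3 hprodnn
          _ ≤ ((2 * α ^ lam) ^ d * (((V lst).card.choose d : ℕ) : ℝ))
              * ∏ j : Fin k, (((V j.castSucc).card.choose d : ℕ) : ℝ) := by
              apply mul_le_mul_of_nonneg_right _ hprodnn
              apply mul_le_mul_of_nonneg_right hN1 (by positivity)
          _ = (2 * α ^ lam) ^ d * ∏ i : Fin (k+1), (((V i).card.choose d : ℕ) : ℝ) := by
              rw [Fin.prod_univ_castSucc]
              ring
      set Light : Finset γ := V lst \ Heavy with hLight
      set Sw : γ → Finset (Fin (k+1) → Finset γ) := fun w => pf.filter (fun W => w ∈ W lst ∧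
        (k : ℝ) * lam * (d : ℝ) ^ k <
          (((Hfib w).filter (fun g => ∀ j : Fin k, g j ∈ W j.castSucc)).card : ℝ)) with hSw
      have hBsub : pf.filter PB ⊆ Light.biUnion Sw := by
        intro W hW
        rw [Finset.mem_filter] at hW
        obtain ⟨hW1, hW2⟩ := hW
        rw [hPB] at hW2
        obtain ⟨w, hwL, hwW, hwbig⟩ := hW2
        rw [Finset.mem_biUnion]
        exact ⟨w, hwL, Finset.mem_filter.mpr ⟨hW1, hwW, hwbig⟩⟩
      have hSwbound : ∀ w ∈ Light, ((Sw w).card : ℝ)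
          ≤ (((d:ℝ)^k - 1) * (2 * α ^ lam) ^ d
              * ∏ j : Fin k, (((V j.castSucc).card.choose d : ℕ) : ℝ))
            * ((((V lst).card - 1).choose (d-1) : ℕ) : ℝ) := by
        intro w hwL
        rw [hLight, Finset.mem_sdiff] at hwL
        set BadWw : Finset (Fin k → Finset γ) :=
          (Fintype.piFinset fun j : Fin k => ((V j.castSucc).powersetCard d)).filter
            (fun W' => (k:ℝ) * lam * (d:ℝ)^k <
              (((Hfib w).filter (fun g => ∀ j : Fin k, g j ∈ W' j)).card : ℝ)) with hBadWw
        set Contw : Finset (Finset γ) := ((V lst).powersetCard d).filter (fun s => w ∈ s)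
          with hContw
        have hcard1 : (Sw w).card ≤ BadWw.card * Contw.card := by
          rw [← Finset.card_product]
          apply Finset.card_le_card_of_injOn (fun W => (W ∘ Fin.castSucc, W lst))
          · intro W hW
            simp only [hSw, Finset.mem_coe, Finset.mem_filter] at hW
            obtain ⟨hW1, hwW, hwbig⟩ := hW
            have hWmem := Fintype.mem_piFinset.1 hW1
            rw [Finset.mem_coe, Finset.mem_product]
            constructor
            · rw [hBadWw, Finset.mem_filter]
              refine ⟨?_, hwbig⟩
              rw [Fintype.mem_piFinset]
              intro j
              exact hWmem j.castSucc
            · rw [hContw, Finset.mem_filter]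
              exact ⟨hWmem lst, hwW⟩
          · intro W1 h1 W2 h2 h
            rw [Prod.mk.injEq] at h
            exact ext_last (congrFun h.1) h.2
        have hContcard : Contw.card = ((V lst).card - 1).choose (d-1) := by
          have hwV : ({w} : Finset γ) ⊆ V lst := Finset.singleton_subset_iff.mpr hwL.1
          have heq : Contw = ((V lst).powersetCard d).filter (fun s => {w} ⊆ s) := by
            rw [hContw]
            apply Finset.filter_congr
            intro s _
            simp [Finset.singleton_subset_iff]
          rw [heq, L0 hwV (by simp only [Finset.card_singleton]; exact Nat.one_le_of_lt hd2)]
          simp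
        have hIH := ih hk1 (fun j => V j.castSucc) (Hfib w) (fun j => hdV j.castSucc)
          (hfibsub w) (hlight w hwL.2 hwL.1)
        have hIH' : (BadWw.card : ℝ) ≤ ((d:ℝ)^k - 1) * (2 * α ^ lam) ^ d
            * ∏ j : Fin k, (((V j.castSucc).card.choose d : ℕ) : ℝ) := hIH
        calc ((Sw w).card : ℝ) ≤ ((BadWw.card * Contw.card : ℕ) : ℝ) := Nat.cast_le.mpr hcard1
          _ = (BadWw.card : ℝ) * (Contw.card : ℝ) := by push_cast; ring
          _ ≤ (((d:ℝ)^k - 1) * (2 * α ^ lam) ^ d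
                * ∏ j : Fin k, (((V j.castSucc).card.choose d : ℕ) : ℝ))
              * (Contw.card : ℝ) := by
              apply mul_le_mul_of_nonneg_right hIH' (by positivity)
          _ = (((d:ℝ)^k - 1) * (2 * α ^ lam) ^ d
                * ∏ j : Fin k, (((V j.castSucc).card.choose d : ℕ) : ℝ))
              * ((((V lst).card - 1).choose (d-1) : ℕ) : ℝ) := by rw [hContcard]
      have hid : ((V lst).card : ℝ) * ((((V lst).card - 1).choose (d-1) : ℕ) : ℝ)
          = (d : ℝ) * (((V lst).card.choose d : ℕ) : ℝ) := by
        have hnl : 1 ≤ (V lst).card := le_trans (Nat.one_le_of_lt hd2) (hdV lst)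
        have hnat := Nat.add_one_mul_choose_eq ((V lst).card - 1) (d-1)
        have e1 : (V lst).card - 1 + 1 = (V lst).card := Nat.sub_add_cancel hnl
        have e2 : d - 1 + 1 = d := Nat.sub_add_cancel (Nat.one_le_of_lt hd2)
        rw [e1, e2] at hnat
        exact_mod_cast congrArg (Nat.cast : ℕ → ℝ) (hnat.trans (mul_comm _ _))
      have hBcount : ((pf.filter PB).card : ℝ)
          ≤ (d:ℝ) * (((d:ℝ)^k - 1) * (2 * α ^ lam) ^ d
              * ∏ i : Fin (k+1), (((V i).card.choose d : ℕ) : ℝ)) := by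
        calc ((pf.filter PB).card : ℝ) ≤ ((Light.biUnion Sw).card : ℝ) :=
              Nat.cast_le.mpr (Finset.card_le_card hBsub)
          _ ≤ ((∑ w ∈ Light, (Sw w).card : ℕ) : ℝ) := Nat.cast_le.mpr Finset.card_biUnion_le
          _ = ∑ w ∈ Light, ((Sw w).card : ℝ) := Nat.cast_sum _ _
          _ ≤ ∑ w ∈ Light, ((((d:ℝ)^k - 1) * (2 * α ^ lam) ^ d
                * ∏ j : Fin k, (((V j.castSucc).card.choose d : ℕ) : ℝ))
              * ((((V lst).card - 1).choose (d-1) : ℕ) : ℝ)) :=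
              Finset.sum_le_sum hSwbound
          _ = (Light.card : ℝ) * ((((d:ℝ)^k - 1) * (2 * α ^ lam) ^ d
                * ∏ j : Fin k, (((V j.castSucc).card.choose d : ℕ) : ℝ))
              * ((((V lst).card - 1).choose (d-1) : ℕ) : ℝ)) := by
              rw [Finset.sum_const, nsmul_eq_mul]
          _ ≤ ((V lst).card : ℝ) * ((((d:ℝ)^k - 1) * (2 * α ^ lam) ^ d
                * ∏ j : Fin k, (((V j.castSucc).card.choose d : ℕ) : ℝ))
              * ((((V lst).card - 1).choose (d-1) : ℕ) : ℝ)) := by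
              apply mul_le_mul_of_nonneg_right _ ?_
              · have h5 : Light.card ≤ (V lst).card := Finset.card_le_card sdiff_subset
                exact_mod_cast h5
              · have hd1r : (1:ℝ) ≤ (d:ℝ) := by exact_mod_cast Nat.le_of_succ_le hd2
                have hd2r : (1:ℝ) ≤ (d:ℝ)^k := one_le_pow₀ hd1r
                have h6 : (0:ℝ) ≤ (d:ℝ)^k - 1 := sub_nonneg.mpr hd2r
                exact mul_nonneg (mul_nonneg (mul_nonneg h6 (by positivity)) (by positivity))
                  (by positivity)
          _ = (((V lst).card : ℝ) * ((((V lst).card - 1).choose (d-1) : ℕ) : ℝ))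
              * (((d:ℝ)^k - 1) * (2 * α ^ lam) ^ d
                * ∏ j : Fin k, (((V j.castSucc).card.choose d : ℕ) : ℝ)) := by ring
          _ = ((d : ℝ) * (((V lst).card.choose d : ℕ) : ℝ))
              * (((d:ℝ)^k - 1) * (2 * α ^ lam) ^ d
                * ∏ j : Fin k, (((V j.castSucc).card.choose d : ℕ) : ℝ)) := by rw [hid]
          _ = (d:ℝ) * (((d:ℝ)^k - 1) * (2 * α ^ lam) ^ d
              * ∏ i : Fin (k+1), (((V i).card.choose d : ℕ) : ℝ)) := by
              rw [Fin.prod_univ_castSucc]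
              ring
      have hP0 : (0:ℝ) ≤ ∏ i : Fin (k+1), (((V i).card.choose d : ℕ) : ℝ) := by positivity
      have hA0 : (0:ℝ) ≤ (2 * α ^ lam) ^ d := by positivity
      have hd2r : (2:ℝ) ≤ (d:ℝ) := by exact_mod_cast hd2
      calc ((pf.filter (fun W => ((k+1 : ℕ) : ℝ) * lam * (d : ℝ) ^ (k+1) <
              ((H.filter fun f => ∀ i, f i ∈ W i).card : ℝ))).card : ℝ)
          ≤ (((pf.filter PA).card + (pf.filter PB).card : ℕ) : ℝ) := by
            exact_mod_cast Nat.cast_le.mpr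
              ((Finset.card_le_card hAB).trans (Finset.card_union_le _ _))
        _ = ((pf.filter PA).card : ℝ) + ((pf.filter PB).card : ℝ) := by push_cast; ring
        _ ≤ (2 * α ^ lam) ^ d * ∏ i : Fin (k+1), (((V i).card.choose d : ℕ) : ℝ)
            + (d:ℝ) * (((d:ℝ)^k - 1) * (2 * α ^ lam) ^ d
              * ∏ i : Fin (k+1), (((V i).card.choose d : ℕ) : ℝ)) := add_le_add hAcount hBcount
        _ ≤ ((d : ℝ) ^ (k+1) - 1) * (2 * α ^ lam) ^ d
            * ∏ i : Fin (k+1), (((V i).card.choose d : ℕ) : ℝ) := by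
            rw [pow_succ]
            nlinarith [mul_nonneg hA0 hP0]

theorem stmt18 (k : ℕ) (hk : 1 ≤ k) (α lam : ℝ)
    (hα : α ∈ Set.Ioo (0 : ℝ) 1) (hlam : lam ∈ Set.Ioo (0 : ℝ) 1)
    (γ : Type) (V : Fin k → Finset γ) (d : ℕ) (hd2 : 2 ≤ d) (hd : ∀ i, d ≤ (V i).card)
    (H : Finset (Fin k → γ)) (hHsub : ∀ f ∈ H, ∀ i, f i ∈ V i)
    (hHcard : (H.card : ℝ) ≤ (α * lam) ^ k * ∏ i, ((V i).card : ℝ)) :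
    (Nat.card {W : Fin k → Finset γ //
        (∀ i, W i ⊆ V i ∧ (W i).card = d) ∧
        (k : ℝ) * lam * (d : ℝ) ^ k <
          (Nat.card {f : Fin k → γ // f ∈ H ∧ ∀ i, f i ∈ W i} : ℝ)} : ℝ) ≤
      ((d : ℝ) ^ k - 1) * (2 * α ^ lam) ^ d * ∏ i, (((V i).card.choose d : ℕ) : ℝ) := by
  classical
  have hinner : ∀ W : Fin k → Finset γ,
      Nat.card {f : Fin k → γ // f ∈ H ∧ ∀ i, f i ∈ W i}
        = (H.filter fun f => ∀ i, f i ∈ W i).card := by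
    intro W
    have e : {f : Fin k → γ // f ∈ H ∧ ∀ i, f i ∈ W i}
        ≃ {f // f ∈ H.filter (fun f => ∀ i, f i ∈ W i)} :=
      Equiv.subtypeEquivRight (fun f => by simp [Finset.mem_filter])
    rw [Nat.card_congr e, Nat.card_eq_finsetCard]
  have e2 : {W : Fin k → Finset γ //
        (∀ i, W i ⊆ V i ∧ (W i).card = d) ∧
        (k : ℝ) * lam * (d : ℝ) ^ k <
          (Nat.card {f : Fin k → γ // f ∈ H ∧ ∀ i, f i ∈ W i} : ℝ)}
      ≃ {W // W ∈ (Fintype.piFinset fun i => (V i).powersetCard d).filter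
          (fun W => (k : ℝ) * lam * (d : ℝ) ^ k <
            ((H.filter fun f => ∀ i, f i ∈ W i).card : ℝ))} :=
    Equiv.subtypeEquivRight (fun W => by
      simp only [Finset.mem_filter, Fintype.mem_piFinset, Finset.mem_powersetCard, hinner W])
  rw [Nat.card_congr e2, Nat.card_eq_finsetCard]
  exact key α lam hα hlam d hd2 k hk V H hd hHsub hHcard
end

section
/- Let d and n be integers with 1 ≤ d ≤ n and let α, λ ∈ (0,1). Then the proportion of d-element subsets X of [n] = {1,…,n} satisfying |X ∩ {1,…,⌊α·λ·n⌋}| ≥ λ·d is at most (2·α^λ)^d. -/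
open Finset
open scoped Classical

-- Lemma A
lemma lemA (m n : ℕ) (h : m ≤ n) : ∀ j : ℕ, m.descFactorial j * n ^ j ≤ m ^ j * n.descFactorial j := by
  intro j
  induction j with
  | zero => simp
  | succ j ih =>
    rw [Nat.descFactorial_succ, Nat.descFactorial_succ, pow_succ, pow_succ]
    calc (m - j) * m.descFactorial j * (n ^ j * n)
        = ((m - j) * n) * (m.descFactorial j * n ^ j) := by ring
      _ ≤ (m * (n - j)) * (m ^ j * n.descFactorial j) := by
          apply Nat.mul_le_mul _ ih
          rw [Nat.sub_mul, Nat.mul_sub]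
          have h1 : m * j ≤ j * n := le_trans (Nat.mul_le_mul_right j h) (le_of_eq (mul_comm n j))
          omega
      _ = m ^ j * m * ((n - j) * n.descFactorial j) := by ring

-- Key nat inequality
lemma keylem (m n d j : ℕ) (hmn : m ≤ n) (hjd : j ≤ d) :
    m.choose j * (n - m).choose (d - j) * n ^ j ≤ d.choose j * m ^ j * n.choose d := by
  by_cases hjm : j ≤ m
  · have hfac : 0 < Nat.factorial j * Nat.factorial (d - j) := Nat.mul_pos j.factorial_pos (d - j).factorial_pos
    apply Nat.le_of_mul_le_mul_left _ hfac
    calc Nat.factorial j * Nat.factorial (d - j) * (m.choose j * (n - m).choose (d - j) * n ^ j)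
        = (Nat.factorial j * m.choose j) * (Nat.factorial (d - j) * (n - m).choose (d - j)) * n ^ j := by ring
      _ = m.descFactorial j * (n - m).descFactorial (d - j) * n ^ j := by
          rw [← Nat.descFactorial_eq_factorial_mul_choose, ← Nat.descFactorial_eq_factorial_mul_choose]
      _ = (m.descFactorial j * n ^ j) * (n - m).descFactorial (d - j) := by ring
      _ ≤ (m ^ j * n.descFactorial j) * (n - j).descFactorial (d - j) := by
          exact Nat.mul_le_mul (lemA m n hmn j)
            (Nat.descFactorial_le _ (Nat.sub_le_sub_left hjm n))
      _ = m ^ j * ((n - j).descFactorial (d - j) * n.descFactorial j) := by ring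
      _ = m ^ j * n.descFactorial d := by rw [Nat.descFactorial_mul_descFactorial hjd]
      _ = m ^ j * (Nat.factorial d * n.choose d) := by rw [Nat.descFactorial_eq_factorial_mul_choose]
      _ = (d.choose j * Nat.factorial j * Nat.factorial (d - j)) * (m ^ j * n.choose d) := by
          rw [Nat.choose_mul_factorial_mul_factorial hjd]; ring
      _ = Nat.factorial j * Nat.factorial (d - j) * (d.choose j * m ^ j * n.choose d) := by ring
  · push_neg at hjm
    rw [Nat.choose_eq_zero_of_lt hjm]
    simp

-- counting lemma
lemma countlem (n d j : ℕ) (p : Fin n → Prop) [DecidablePred p] (hjd : j ≤ d) :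
    (((Finset.powersetCard d (Finset.univ : Finset (Fin n))).filter
        (fun X => (X.filter p).card = j)).card
      ≤ ((univ.filter p).card.choose j) * ((univ.filter (fun x => ¬ p x)).card.choose (d - j))) := by
  classical
  rw [← Finset.card_powersetCard, ← Finset.card_powersetCard, ← Finset.card_product]
  apply Finset.card_le_card_of_injOn (fun X => (X.filter p, X.filter (fun x => ¬ p x)))
  · intro X hX
    simp only [Finset.mem_coe, Finset.mem_filter, Finset.mem_powersetCard] at hX
    obtain ⟨⟨-, hcard⟩, hj⟩ := hX
    simp only [Finset.mem_coe, Finset.mem_product, Finset.mem_powersetCard]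
    refine ⟨⟨fun x hx => ?_, hj⟩, fun x hx => ?_, ?_⟩
    · simp only [Finset.mem_filter] at hx ⊢; exact ⟨Finset.mem_univ _, hx.2⟩
    · simp only [Finset.mem_filter] at hx ⊢; exact ⟨Finset.mem_univ _, hx.2⟩
    · have := Finset.card_filter_add_card_filter_not (s := X) p
      omega
  · intro X hX Y hY h
    simp only [Prod.mk.injEq] at h
    have : X.filter p ∪ X.filter (fun x => ¬ p x) = Y.filter p ∪ Y.filter (fun x => ¬ p x) := by
      rw [h.1, h.2]
    rwa [Finset.filter_union_filter_not_eq, Finset.filter_union_filter_not_eq] at this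

lemma cardA (n M : ℕ) (h : M ≤ n) :
    ((univ : Finset (Fin n)).filter (fun x : Fin n => (x : ℕ) < M)).card = M := by
  classical
  have : ((univ : Finset (Fin n)).filter (fun x : Fin n => (x : ℕ) < M)) =
      (Finset.range M).attachFin (fun m hm => lt_of_lt_of_le (Finset.mem_range.1 hm) h) := by
    ext x
    simp [Finset.mem_attachFin]
  rw [this, Finset.card_attachFin, Finset.card_range]

theorem stmt19 (d n : ℕ) (hd : 1 ≤ d) (hdn : d ≤ n) (α lam : ℝ)
    (hα : α ∈ Set.Ioo (0 : ℝ) 1) (hlam : lam ∈ Set.Ioo (0 : ℝ) 1) :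
    (((Finset.powersetCard d (Finset.univ : Finset (Fin n))).filter
          (fun X => lam * (d : ℝ) ≤
            ((X.filter fun x : Fin n => (x : ℕ) < Nat.floor (α * lam * (n : ℝ))).card : ℝ))).card
        : ℝ) / (n.choose d : ℝ) ≤ (2 * α ^ lam) ^ d := by
  classical
  obtain ⟨hα0, hα1⟩ := hα
  obtain ⟨hl0, hl1⟩ := hlam
  have hn1 : 1 ≤ n := le_trans hd hdn
  have hn0 : (0 : ℝ) < n := by exact_mod_cast hn1
  set M := Nat.floor (α * lam * (n : ℝ)) with hMdef
  have hMle : (M : ℝ) ≤ α * lam * n := Nat.floor_le (by positivity)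
  have hMn : M ≤ n := by
    have h2 : α * lam ≤ 1 := by nlinarith
    have : (M : ℝ) ≤ n := le_trans hMle (by nlinarith)
    exact_mod_cast this
  have hMα : (M : ℝ) / n ≤ α := by
    rw [div_le_iff₀ hn0]; nlinarith
  set p : Fin n → Prop := fun x => (x : ℕ) < M with hpdef
  have hA : ((univ : Finset (Fin n)).filter p).card = M := cardA n M hMn
  have hB : ((univ : Finset (Fin n)).filter (fun x => ¬ p x)).card = n - M := by
    have h1 := Finset.card_filter_add_card_filter_not (s := (univ : Finset (Fin n))) p
    rw [Finset.card_univ, Fintype.card_fin, hA] at h1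
    omega
  set S : Finset ℕ := (Finset.range (d + 1)).filter (fun j : ℕ => lam * d ≤ (j : ℝ)) with hSdef
  set F := (Finset.powersetCard d (Finset.univ : Finset (Fin n))).filter
      (fun X => lam * (d : ℝ) ≤ ((X.filter p).card : ℝ)) with hFdef
  -- step 1
  have hsub : F ⊆ S.biUnion (fun j =>
      (Finset.powersetCard d (univ : Finset (Fin n))).filter (fun X => (X.filter p).card = j)) := by
    intro X hX
    rw [hFdef, Finset.mem_filter] at hX
    obtain ⟨hX1, hX2⟩ := hX
    rw [Finset.mem_biUnion]
    refine ⟨(X.filter p).card, ?_, ?_⟩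
    · rw [hSdef, Finset.mem_filter, Finset.mem_range]
      have hcard : X.card = d := (Finset.mem_powersetCard.1 hX1).2
      have : (X.filter p).card ≤ d := by
        rw [← hcard]; exact Finset.card_filter_le _ _
      exact ⟨by omega, hX2⟩
    · rw [Finset.mem_filter]; exact ⟨hX1, rfl⟩
  have step1 : F.card ≤ ∑ j ∈ S, M.choose j * (n - M).choose (d - j) := by
    refine le_trans (Finset.card_le_card hsub) (le_trans (Finset.card_biUnion_le) ?_)
    refine Finset.sum_le_sum fun j hj => ?_
    have hjd : j ≤ d := by
      rw [hSdef, Finset.mem_filter, Finset.mem_range] at hj; omega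
    have := countlem n d j p hjd
    rwa [hA, hB] at this
  -- real part
  have hC0 : (0 : ℝ) < (n.choose d : ℝ) := by exact_mod_cast Nat.choose_pos hdn
  rw [div_le_iff₀ hC0]
  have termbound : ∀ j ∈ S, ((M.choose j : ℝ) * ((n - M).choose (d - j) : ℝ)) ≤
      (d.choose j : ℝ) * (α ^ (lam * d) * (n.choose d : ℝ)) := by
    intro j hj
    rw [hSdef, Finset.mem_filter, Finset.mem_range] at hj
    obtain ⟨hjd', hjlam⟩ := hj
    have hjd : j ≤ d := by omega
    have hnj : (0 : ℝ) < (n : ℝ) ^ j := pow_pos hn0 j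
    have key : ((M.choose j * (n - M).choose (d - j) * n ^ j : ℕ) : ℝ) ≤
        ((d.choose j * M ^ j * n.choose d : ℕ) : ℝ) := by
      exact_mod_cast keylem M n d j hMn hjd
    push_cast at key
    have h1 : (M.choose j : ℝ) * ((n - M).choose (d - j) : ℝ) ≤
        (d.choose j : ℝ) * ((M : ℝ) / n) ^ j * (n.choose d : ℝ) := by
      rw [div_pow]
      rw [show (d.choose j : ℝ) * ((M : ℝ) ^ j / (n : ℝ) ^ j) * (n.choose d : ℝ)
          = (d.choose j : ℝ) * (M : ℝ) ^ j * (n.choose d : ℝ) / (n : ℝ) ^ j by ring]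
      rw [le_div_iff₀ hnj]
      exact key
    have h2 : ((M : ℝ) / n) ^ j ≤ α ^ (lam * d) := by
      calc ((M : ℝ) / n) ^ j ≤ α ^ j := pow_le_pow_left₀ (by positivity) hMα j
        _ = α ^ ((j : ℕ) : ℝ) := (Real.rpow_natCast α j).symm
        _ ≤ α ^ (lam * d) := Real.rpow_le_rpow_of_exponent_ge hα0 hα1.le hjlam
    calc (M.choose j : ℝ) * ((n - M).choose (d - j) : ℝ)
        ≤ (d.choose j : ℝ) * ((M : ℝ) / n) ^ j * (n.choose d : ℝ) := h1
      _ ≤ (d.choose j : ℝ) * α ^ (lam * d) * (n.choose d : ℝ) := by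
          gcongr
      _ = (d.choose j : ℝ) * (α ^ (lam * d) * (n.choose d : ℝ)) := by ring
  have sumbound : (∑ j ∈ S, (d.choose j : ℝ)) ≤ 2 ^ d := by
    have h1 : (∑ j ∈ S, d.choose j) ≤ ∑ j ∈ Finset.range (d + 1), d.choose j :=
      Finset.sum_le_sum_of_subset (Finset.filter_subset _ _)
    rw [Nat.sum_range_choose] at h1
    calc (∑ j ∈ S, (d.choose j : ℝ)) = ((∑ j ∈ S, d.choose j : ℕ) : ℝ) := by push_cast; ring
      _ ≤ ((2 ^ d : ℕ) : ℝ) := by exact_mod_cast h1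
      _ = 2 ^ d := by push_cast; ring
  calc (F.card : ℝ) ≤ ((∑ j ∈ S, M.choose j * (n - M).choose (d - j) : ℕ) : ℝ) := by
        exact_mod_cast step1
    _ = ∑ j ∈ S, (M.choose j : ℝ) * ((n - M).choose (d - j) : ℝ) := by push_cast; ring
    _ ≤ ∑ j ∈ S, (d.choose j : ℝ) * (α ^ (lam * d) * (n.choose d : ℝ)) :=
        Finset.sum_le_sum termbound
    _ = (∑ j ∈ S, (d.choose j : ℝ)) * (α ^ (lam * d) * (n.choose d : ℝ)) := by
        rw [← Finset.sum_mul]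
    _ ≤ 2 ^ d * (α ^ (lam * d) * (n.choose d : ℝ)) := by
        apply mul_le_mul_of_nonneg_right sumbound
        positivity
    _ = (2 * α ^ lam) ^ d * (n.choose d : ℝ) := by
        rw [mul_pow, Real.rpow_mul hα0.le, ← Real.rpow_natCast (α ^ lam) d]
        push_cast
        ring
end
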